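/- arXiv:1002.3881 — 8 statements merged into one kernel-verified Lean document; each statement's English description precedes it below -/
import Mathlib

section
/- Define g(z) = -log(β(1 - e^{-z})) where β(u) = (u + sqrt(u(4-3u)))/2. Then g is decreasing on (0,∞), and for sufficiently small z > 0, log(1/sqrt(z)) - sqrt(z) ≤ g(z) ≤ log(1/sqrt(z)) + z. -/
noncomputable def beta (u : ℝ) : ℝ := (u + Real.sqrt (u * (4 - 3 * u))) / 2

noncomputable def gfun (z : ℝ) : ℝ := -Real.log (beta (1 - Real.exp (-z)))

lemma sqrt_gt_aux {u : ℝ} (h0 : 0 < u) (h1 : u < 1) :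
    3 * u - 2 < Real.sqrt (u * (4 - 3 * u)) := by
  have hnn : 0 < u * (4 - 3 * u) := by nlinarith
  have ha : 0 < Real.sqrt (u * (4 - 3 * u)) := Real.sqrt_pos.mpr hnn
  have ha2 : (Real.sqrt (u * (4 - 3 * u)))^2 = u * (4 - 3*u) :=
    Real.sq_sqrt hnn.le
  rcases le_or_gt (3*u - 2) 0 with h | h
  · linarith
  · nlinarith [ha, ha2]

lemma beta_pos {u : ℝ} (h0 : 0 < u) : 0 < beta u := by
  have := Real.sqrt_nonneg (u * (4 - 3 * u))
  unfold beta; linarith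

lemma beta_strictMono {u v : ℝ} (hu : 0 < u) (huv : u < v) (hv : v < 1) :
    beta u < beta v := by
  set a := Real.sqrt (u * (4 - 3*u)) with ha_def
  set b := Real.sqrt (v * (4 - 3*v)) with hb_def
  have hu1 : u < 1 := huv.trans hv
  have ha2 : a^2 = u * (4-3*u) := Real.sq_sqrt (by nlinarith)
  have hb2 : b^2 = v * (4-3*v) := Real.sq_sqrt (by nlinarith)
  have ha := sqrt_gt_aux hu hu1
  have hb := sqrt_gt_aux (hu.trans huv) hv
  rw [← ha_def] at ha
  rw [← hb_def] at hb
  have hapos : 0 < a := Real.sqrt_pos.mpr (by nlinarith)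
  have hbpos : 0 ≤ b := Real.sqrt_nonneg _
  have key : 0 < (b - a + (v - u)) * (a + b) := by nlinarith
  have hmain : 0 < b - a + (v - u) := by
    by_contra hc
    push_neg at hc
    nlinarith
  unfold beta
  linarith

lemma sqrt_le_beta {u : ℝ} (h0 : 0 ≤ u) (h1 : u ≤ 1) : Real.sqrt u ≤ beta u := by
  set s := Real.sqrt u with hs_def
  have hs0 : 0 ≤ s := Real.sqrt_nonneg u
  have hs2 : s^2 = u := Real.sq_sqrt h0
  have hs1 : s ≤ 1 := by
    rw [show (1:ℝ) = Real.sqrt 1 by simp [Real.sqrt_one]]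
    exact Real.sqrt_le_sqrt h1
  have hkey : 2*s - s^2 ≤ Real.sqrt (u * (4 - 3*u)) := by
    apply Real.le_sqrt_of_sq_le
    nlinarith [mul_nonneg (mul_nonneg hs0 (mul_nonneg hs0 hs0)) (sub_nonneg.mpr hs1), hs2]
  unfold beta
  linarith

lemma beta_le {u : ℝ} (h0 : 0 ≤ u) : beta u ≤ Real.sqrt u + u / 2 := by
  have h1 : Real.sqrt (u * (4 - 3*u)) ≤ Real.sqrt (4 * u) :=
    Real.sqrt_le_sqrt (by nlinarith)
  have h2 : Real.sqrt (4 * u) = 2 * Real.sqrt u := by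
    rw [Real.sqrt_mul (by norm_num : (0:ℝ) ≤ 4), show (4:ℝ) = 2^2 by norm_num,
      Real.sqrt_sq (by norm_num : (0:ℝ) ≤ 2)]
  unfold beta
  rw [h2] at h1
  linarith

/-- `g` is decreasing on `(0,∞)`, and for sufficiently small `z > 0` we have
`log(1/√z) - √z ≤ g(z) ≤ log(1/√z) + z`. -/
theorem stmt3 :
    StrictAntiOn gfun (Set.Ioi 0) ∧
    ∃ z0 : ℝ, 0 < z0 ∧ ∀ z : ℝ, 0 < z → z ≤ z0 →
      Real.log (1 / Real.sqrt z) - Real.sqrt z ≤ gfun z ∧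
      gfun z ≤ Real.log (1 / Real.sqrt z) + z := by
  constructor
  · intro x hx y hy hxy
    simp only [Set.mem_Ioi] at hx hy
    have hux0 : 0 < 1 - Real.exp (-x) := by
      have : Real.exp (-x) < 1 := Real.exp_lt_one_iff.mpr (by linarith)
      linarith
    have huxy : 1 - Real.exp (-x) < 1 - Real.exp (-y) := by
      have : Real.exp (-y) < Real.exp (-x) := Real.exp_lt_exp.mpr (by linarith)
      linarith
    have huy1 : 1 - Real.exp (-y) < 1 := by
      have := Real.exp_pos (-y); linarith
    have hb := beta_strictMono hux0 huxy huy1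
    have := Real.log_lt_log (beta_pos hux0) hb
    unfold gfun
    linarith
  · refine ⟨1, one_pos, fun z hz _ => ?_⟩
    set u := 1 - Real.exp (-z) with hu_def
    have hu0 : 0 < u := by
      have : Real.exp (-z) < 1 := Real.exp_lt_one_iff.mpr (by linarith)
      simp only [hu_def]; linarith
    have hu1 : u < 1 := by
      have := Real.exp_pos (-z); simp only [hu_def]; linarith
    have huz : u ≤ z := by
      have := Real.add_one_le_exp (-z)
      simp only [hu_def]; linarith
    have hsz : 0 < Real.sqrt z := Real.sqrt_pos.mpr hz
    have hlog1 : Real.log (1 / Real.sqrt z) = - Real.log (Real.sqrt z) := by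
      rw [one_div, Real.log_inv]
    -- key lower bound: √z * exp(-z) ≤ beta u
    have hexpzl : z * Real.exp (-z) ≤ u := by
      have h1 := Real.add_one_le_exp z
      have h2 : Real.exp (-z) * Real.exp z = 1 := by
        rw [← Real.exp_add]; simp
      have h3 := Real.exp_pos (-z)
      simp only [hu_def]
      nlinarith
    have hA : Real.sqrt z * Real.exp (-z) ≤ beta u := by
      have s1 : Real.exp (-z) ≤ Real.sqrt (Real.exp (-z)) := by
        apply Real.le_sqrt_of_sq_le
        nlinarith [Real.exp_pos (-z), Real.exp_lt_one_iff.mpr (show -z < 0 by linarith)]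
      have s2 : Real.sqrt z * Real.sqrt (Real.exp (-z)) = Real.sqrt (z * Real.exp (-z)) := by
        rw [Real.sqrt_mul hz.le]
      have s3 : Real.sqrt (z * Real.exp (-z)) ≤ Real.sqrt u := Real.sqrt_le_sqrt hexpzl
      have s4 : Real.sqrt u ≤ beta u := sqrt_le_beta hu0.le hu1.le
      have s5 : Real.sqrt z * Real.exp (-z) ≤ Real.sqrt z * Real.sqrt (Real.exp (-z)) :=
        mul_le_mul_of_nonneg_left s1 hsz.le
      linarith [s2 ▸ s5]
    -- key upper bound: beta u ≤ √z * exp (√z)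
    have hB : beta u ≤ Real.sqrt z * Real.exp (Real.sqrt z) := by
      have t1 : beta u ≤ Real.sqrt u + u / 2 := beta_le hu0.le
      have t2 : Real.sqrt u ≤ Real.sqrt z := Real.sqrt_le_sqrt huz
      have t3 : Real.sqrt z * Real.sqrt z = z := Real.mul_self_sqrt hz.le
      have t4 : 1 + Real.sqrt z ≤ Real.exp (Real.sqrt z) := by
        have := Real.add_one_le_exp (Real.sqrt z); linarith
      have t5 : Real.sqrt z + z / 2 ≤ Real.sqrt z * Real.exp (Real.sqrt z) := by
        nlinarith
      linarith
    constructor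
    · -- lower bound on g from hB
      have hlog : Real.log (beta u) ≤ Real.log (Real.sqrt z * Real.exp (Real.sqrt z)) :=
        Real.log_le_log (beta_pos hu0) hB
      rw [Real.log_mul (ne_of_gt hsz) (ne_of_gt (Real.exp_pos _)), Real.log_exp] at hlog
      unfold gfun
      rw [← hu_def, hlog1]
      linarith
    · -- upper bound on g from hA
      have hpos : 0 < Real.sqrt z * Real.exp (-z) := by positivity
      have hlog : Real.log (Real.sqrt z * Real.exp (-z)) ≤ Real.log (beta u) :=
        Real.log_le_log hpos hA
      rw [Real.log_mul (ne_of_gt hsz) (ne_of_gt (Real.exp_pos _)), Real.log_exp] at hlog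
      unfold gfun
      rw [← hu_def, hlog1]
      linarith
end

section
/- With g(z) = -log(β(1 - e^{-z})) and β(u) = (u + sqrt(u(4-3u)))/2, there exists a constant C > 0 such that for every 0 < a < ∞, ∫_0^a g(z) dz ≤ (a/2)·log(1 + 1/a) + C·a. -/
open MeasureTheory

lemma log_integrableOn (a : ℝ) : IntegrableOn Real.log (Set.Ioc 0 a) := by
  have hb : IntegrableOn (fun z : ℝ => 2 * z ^ (-(1:ℝ)/2) + z) (Set.Ioc 0 a) := by
    apply Integrable.add
    · exact ((intervalIntegral.intervalIntegrable_rpow' (by norm_num : (-1:ℝ) < -1/2)).1.const_mul 2)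
    · exact (continuous_id.integrableOn_Ioc)
  refine Integrable.mono' hb Real.measurable_log.aestronglyMeasurable ?_
  filter_upwards [ae_restrict_mem measurableSet_Ioc] with z hz
  rcases hz with ⟨hz0, hza⟩
  rcases le_or_gt z 1 with h1 | h1
  · have hs : Real.sqrt z > 0 := Real.sqrt_pos.mpr hz0
    have hlog : -Real.log z = 2 * Real.log (1 / Real.sqrt z) := by
      rw [Real.log_div one_ne_zero (ne_of_gt hs), Real.log_one, Real.log_sqrt hz0.le]; ring
    have h2 : Real.log (1 / Real.sqrt z) ≤ 1 / Real.sqrt z := by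
      have := Real.log_le_sub_one_of_pos (by positivity : (0:ℝ) < 1 / Real.sqrt z)
      linarith
    have hrp : z ^ (-(1:ℝ)/2) = 1 / Real.sqrt z := by
      rw [Real.sqrt_eq_rpow, one_div, ← Real.rpow_neg hz0.le]
      norm_num
    have hlz : Real.log z ≤ 0 := Real.log_nonpos hz0.le h1
    rw [Real.norm_eq_abs, abs_of_nonpos hlz, hrp]
    nlinarith
  · have : Real.log z ≤ z := (Real.log_le_sub_one_of_pos hz0).trans (by linarith)
    have h0 : 0 ≤ Real.log z := Real.log_nonneg h1.le
    rw [Real.norm_eq_abs, abs_of_nonneg h0]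
    have : (0:ℝ) ≤ 2 * z ^ (-(1:ℝ)/2) := by positivity
    linarith

lemma log_intervalIntegrable (a : ℝ) (ha : 0 ≤ a) :
    IntervalIntegrable Real.log volume 0 a := by
  rw [intervalIntegrable_iff_integrableOn_Ioc_of_le ha]
  exact log_integrableOn a

lemma integral_log_zero (a : ℝ) (ha : 0 < a) :
    ∫ z in (0:ℝ)..a, Real.log z = a * Real.log a - a := by
  have h := intervalIntegral.integral_eq_sub_of_hasDerivAt_of_le ha.le
    (f := fun z => z * Real.log z - z) (f' := Real.log)
    ((Real.continuous_mul_log.sub continuous_id).continuousOn)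
    (fun x hx => by
      simpa using (Real.hasDerivAt_mul_log hx.1.ne').fun_sub (hasDerivAt_id x))
    (log_intervalIntegrable a ha.le)
  simpa using h

lemma integral_log_one_add (a : ℝ) (ha : 0 < a) :
    ∫ z in (0:ℝ)..a, Real.log (1 + z) = (1 + a) * Real.log (1 + a) - a := by
  have h := intervalIntegral.integral_eq_sub_of_hasDerivAt
    (f := fun z => (1 + z) * Real.log (1 + z) - z) (f' := fun z => Real.log (1 + z))
    (a := 0) (b := a)
    (fun x hx => by
      have hx0 : 0 ≤ x := by
        rcases Set.mem_uIcc.mp hx with h | h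
        · exact h.1
        · linarith [h.1, ha]
      have h1x : (1:ℝ) + x ≠ 0 := by positivity
      have hc : HasDerivAt (fun z : ℝ => (1 + z) * Real.log (1 + z))
          ((Real.log (1 + x) + 1) * 1) x :=
        (Real.hasDerivAt_mul_log h1x).comp x ((hasDerivAt_id x).const_add 1)
      simpa using hc.fun_sub (hasDerivAt_id x))
    (by
      apply ContinuousOn.intervalIntegrable
      apply ContinuousOn.log
      · exact (continuous_const.add continuous_id).continuousOn
      · intro x hx
        have hx0 : 0 ≤ x := by
          rcases Set.mem_uIcc.mp hx with h | h
          · exact h.1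
          · linarith [h.1, ha]
        positivity)
  simpa using h

lemma gfun_le (z : ℝ) (hz : 0 < z) :
    gfun z ≤ Real.log 2 + (1/2) * (Real.log (1 + z) - Real.log z) := by
  set u := 1 - Real.exp (-z) with hu
  have hu0 : 0 < u := by
    have : Real.exp (-z) < 1 := Real.exp_lt_one_iff.mpr (by linarith)
    simp [hu]; linarith
  have hu1 : u < 1 := by
    have := Real.exp_pos (-z); simp [hu]; linarith
  -- beta u ≥ sqrt u / 2
  have hsq : Real.sqrt u ≤ Real.sqrt (u * (4 - 3 * u)) := by
    apply Real.sqrt_le_sqrt; nlinarith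
  have hbeta : Real.sqrt u / 2 ≤ beta u := by
    have h0 : 0 ≤ u := hu0.le
    unfold beta
    have : (0:ℝ) ≤ u := h0
    linarith
  have hspos : 0 < Real.sqrt u / 2 := by positivity
  have h1 : gfun z ≤ -Real.log (Real.sqrt u / 2) := by
    unfold gfun
    rw [← hu]
    exact neg_le_neg (Real.log_le_log hspos hbeta)
  have h2 : Real.log (Real.sqrt u / 2) = (1/2) * Real.log u - Real.log 2 := by
    rw [Real.log_div (by positivity) (by norm_num), Real.log_sqrt hu0.le]; ring
  -- u ≥ z / (1+z)
  have hzq : z / (1 + z) ≤ u := by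
    have hez : 1 + z ≤ Real.exp z := by linarith [Real.add_one_le_exp z]
    have h1z : (0:ℝ) < 1 + z := by linarith
    have : Real.exp (-z) ≤ (1 + z)⁻¹ := by
      rw [Real.exp_neg]
      exact inv_anti₀ h1z hez
    have : 1 - (1 + z)⁻¹ ≤ u := by simp [hu]; linarith
    calc z / (1 + z) = 1 - (1 + z)⁻¹ := by field_simp; ring
    _ ≤ u := this
  have hlogu : Real.log z - Real.log (1 + z) ≤ Real.log u := by
    have hq : 0 < z / (1 + z) := by positivity
    have := Real.log_le_log hq hzq
    rwa [Real.log_div hz.ne' (by positivity)] at this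
  linarith [h1, h2.symm ▸ (by linarith : -Real.log (Real.sqrt u / 2) = Real.log 2 - (1/2) * Real.log u)]

/-- There is a constant `C > 0` such that `∫_0^a g ≤ (a/2)·log(1 + 1/a) + C·a`
for every `0 < a < ∞`. -/
theorem stmt4 :
    ∃ C : ℝ, 0 < C ∧ ∀ a : ℝ, 0 < a →
      ∫ z in Set.Ioo (0 : ℝ) a, gfun z ≤ a / 2 * Real.log (1 + 1 / a) + C * a := by
  refine ⟨Real.log 2 + 1/2, by positivity, fun a ha => ?_⟩
  set h : ℝ → ℝ := fun z => Real.log 2 + (1/2) * (Real.log (1 + z) - Real.log z) with hh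
  have hint_h_Ioc : IntegrableOn h (Set.Ioc 0 a) := by
    apply Integrable.add
    · exact integrableOn_const measure_Ioc_lt_top.ne
    · apply Integrable.const_mul
      apply Integrable.sub
      · apply ContinuousOn.integrableOn_Icc (a := 0) (b := a) ?_ |>.mono_set Set.Ioc_subset_Icc_self
        apply ContinuousOn.log ((continuous_const.add continuous_id).continuousOn)
        intro x hx
        have := hx.1
        simp only [Pi.add_apply, id_eq]; positivity
      · exact log_integrableOn a
  have hint_h : IntegrableOn h (Set.Ioo 0 a) := hint_h_Ioc.mono_set Set.Ioo_subset_Ioc_self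
  have hlog1 : IntervalIntegrable (fun z => Real.log (1 + z)) volume 0 a := by
    apply ContinuousOn.intervalIntegrable
    apply ContinuousOn.log ((continuous_const.add continuous_id).continuousOn)
    intro x hx
    have hx0 : 0 ≤ x := by
      rcases Set.mem_uIcc.mp hx with h | h
      · exact h.1
      · linarith [h.1, ha]
    simp only [Pi.add_apply, id_eq]; positivity
  have hlog : IntervalIntegrable Real.log volume 0 a := log_intervalIntegrable a ha.le
  have e0 : ∫ z in Set.Ioo (0:ℝ) a, h z = ∫ z in (0:ℝ)..a, h z := by
    rw [intervalIntegral.integral_of_le ha.le, MeasureTheory.integral_Ioc_eq_integral_Ioo]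
  have e1 : ∫ z in (0:ℝ)..a, h z
      = a * Real.log 2 + (1/2) * (((1 + a) * Real.log (1 + a) - a) - (a * Real.log a - a)) := by
    rw [hh]
    rw [intervalIntegral.integral_add (intervalIntegrable_const) ((hlog1.sub hlog).const_mul _),
      intervalIntegral.integral_const_mul, intervalIntegral.integral_sub hlog1 hlog,
      integral_log_one_add a ha, integral_log_zero a ha]
    simp [smul_eq_mul]
  have hsplit : Real.log (1 + 1/a) = Real.log (1 + a) - Real.log a := by
    rw [show (1 + 1/a) = (1 + a)/a by field_simp; ring,
      Real.log_div (by positivity) ha.ne']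
  have hlb : Real.log (1 + a) ≤ a := by
    have := Real.log_le_sub_one_of_pos (by positivity : (0:ℝ) < 1 + a)
    linarith
  have hvalbd : ∫ z in Set.Ioo (0:ℝ) a, h z ≤ a / 2 * Real.log (1 + 1/a) + (Real.log 2 + 1/2) * a := by
    rw [e0, e1, hsplit]
    nlinarith
  by_cases hg : IntegrableOn gfun (Set.Ioo 0 a)
  · calc ∫ z in Set.Ioo (0:ℝ) a, gfun z ≤ ∫ z in Set.Ioo (0:ℝ) a, h z :=
        setIntegral_mono_on hg hint_h measurableSet_Ioo (fun x hx => gfun_le x hx.1)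
    _ ≤ a / 2 * Real.log (1 + 1/a) + (Real.log 2 + 1/2) * a := hvalbd
  · rw [integral_undef hg]
    have h1 : 0 ≤ a / 2 * Real.log (1 + 1/a) := by
      apply mul_nonneg (by positivity)
      apply Real.log_nonneg
      have : 0 < 1/a := by positivity
      linarith
    nlinarith [Real.log_pos (by norm_num : (1:ℝ) < 2)]
end

section
/- With g(z) = -log(β(1 - e^{-z})) and β(u) = (u + sqrt(u(4-3u)))/2, we have ∫_0^∞ g(z) dz = π²/18. -/
open MeasureTheory

open Real Set Filter Topology

noncomputable def li2 : ℝ → ℝ := fun x => ∫ t in (0:ℝ)..x, -Real.log (1 - t) / t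

lemma hfun_meas : Measurable (fun t : ℝ => -Real.log (1 - t) / t) :=
  ((Real.measurable_log.comp (measurable_const.sub measurable_id)).neg.div measurable_id)

lemma hsum {t : ℝ} (h0 : 0 < t) (h1 : t < 1) :
    HasSum (fun n : ℕ => t ^ n / (n + 1)) (-Real.log (1 - t) / t) := by
  have habs : |t| < 1 := abs_lt.mpr ⟨by linarith, h1⟩
  have H := (hasSum_pow_div_log_of_abs_lt_one habs).div_const t
  have : (fun n : ℕ => t ^ (n + 1) / ((n : ℝ) + 1) / t) = fun n : ℕ => t ^ n / ((n : ℝ) + 1) := by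
    funext n
    rw [pow_succ]
    field_simp
  rwa [this] at H

lemma sum_one_div_sq : HasSum (fun n : ℕ => 1 / ((n : ℝ) + 1) ^ 2) (Real.pi ^ 2 / 6) := by
  have h := hasSum_zeta_two
  have h2 := (hasSum_nat_add_iff (f := fun n : ℕ => 1 / (n : ℝ) ^ 2) 1).mpr
    (by simpa using h)
  have : (fun n : ℕ => 1 / ((n + 1 : ℕ) : ℝ) ^ 2) = fun n : ℕ => 1 / ((n : ℝ) + 1) ^ 2 := by
    funext n; push_cast; ring
  rwa [this] at h2

lemma poly_int (n : ℕ) : ∫ t in Ioo (0:ℝ) 1, t ^ n / ((n : ℝ) + 1) = 1 / ((n : ℝ) + 1) ^ 2 := by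
  have hne : ((n : ℝ) + 1) ≠ 0 := by positivity
  rw [← integral_Ioc_eq_integral_Ioo, ← intervalIntegral.integral_of_le zero_le_one,
    intervalIntegral.integral_div, integral_pow]
  rw [one_pow, zero_pow (by omega)]
  push_cast
  field_simp
  ring

lemma Qpos' (w : ℝ) : 0 < w ^ 2 - w + 1 := by nlinarith [sq_nonneg (2 * w - 1)]

noncomputable def Gt : ℝ → ℝ := fun v =>
  li2 (v ^ 2) / 2 - li2 v - li2 (v ^ 6) / 6 + li2 (v ^ 3) / 3

noncomputable def Ff : ℝ → ℝ := fun w =>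
  -li2 (1 - w) - Real.log w * Real.log (w ^ 2 - w + 1) + Gt w - Gt (1 - w)
    + (Real.log (w ^ 2 - w + 1)) ^ 2 / 2

noncomputable def psi : ℝ → ℝ := fun w => Real.log (1 + w ^ 3) - Real.log (1 - w ^ 2)

noncomputable def DF1 : ℝ → ℝ := fun w => 3 * w ^ 2 / (1 + w ^ 3) + 2 * w / (1 - w ^ 2)

noncomputable def DF : ℝ → ℝ := fun w => DF1 w * (Real.log (w ^ 2 - w + 1) - Real.log w)

lemma term_intOn (n : ℕ) :
    IntegrableOn (fun t : ℝ => t ^ n / ((n : ℝ) + 1)) (Ioo 0 1) := by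
  apply (((continuous_pow n).div_const _).integrableOn_Icc (a := (0:ℝ)) (b := 1)).mono_set
  exact Ioo_subset_Icc_self

lemma term_nonneg (n : ℕ) {t : ℝ} (ht : t ∈ Ioo (0:ℝ) 1) : 0 ≤ t ^ n / ((n : ℝ) + 1) := by
  have := ht.1.le; positivity

lemma h_nonneg {t : ℝ} (ht : t ∈ Ioo (0:ℝ) 1) : 0 ≤ -Real.log (1 - t) / t := by
  apply div_nonneg _ ht.1.le
  rw [neg_nonneg]
  exact Real.log_nonpos (by linarith [ht.2]) (by linarith [ht.1])

lemma h_integrableOn : IntegrableOn (fun t : ℝ => -Real.log (1 - t) / t) (Ioo 0 1) := by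
  refine ⟨hfun_meas.aestronglyMeasurable, ?_⟩
  rw [hasFiniteIntegral_iff_ofReal ?_]
  swap
  · rw [EventuallyLE, ae_restrict_iff' measurableSet_Ioo]
    exact ae_of_all _ fun t ht => h_nonneg ht
  have key : ∀ t ∈ Ioo (0:ℝ) 1,
      ENNReal.ofReal (-Real.log (1 - t) / t) = ∑' n : ℕ, ENNReal.ofReal (t ^ n / ((n:ℝ) + 1)) := by
    intro t ht
    rw [← ENNReal.ofReal_tsum_of_nonneg (fun n => term_nonneg n ht) (hsum ht.1 ht.2).summable]
    rw [(hsum ht.1 ht.2).tsum_eq]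
  rw [setLIntegral_congr_fun measurableSet_Ioo key,
    lintegral_tsum (fun n =>
      ((continuous_pow n).measurable.div_const _).ennreal_ofReal.aemeasurable)]
  have e1 : ∀ n : ℕ, ∫⁻ t in Ioo (0:ℝ) 1, ENNReal.ofReal (t ^ n / ((n:ℝ) + 1))
      = ENNReal.ofReal (1 / ((n:ℝ) + 1) ^ 2) := by
    intro n
    rw [← ofReal_integral_eq_lintegral_ofReal (term_intOn n)
      (by rw [EventuallyLE, ae_restrict_iff' measurableSet_Ioo]
          exact ae_of_all _ fun t ht => term_nonneg n ht), poly_int n]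
  simp_rw [e1]
  rw [← ENNReal.ofReal_tsum_of_nonneg (fun n => by positivity) sum_one_div_sq.summable]
  exact ENNReal.ofReal_lt_top

lemma h_int_value : ∫ t in Ioo (0:ℝ) 1, -Real.log (1 - t) / t = Real.pi ^ 2 / 6 := by
  have e0 : ∫ t in Ioo (0:ℝ) 1, -Real.log (1 - t) / t
      = ∫ t in Ioo (0:ℝ) 1, ∑' n : ℕ, t ^ n / ((n:ℝ) + 1) := by
    apply setIntegral_congr_fun measurableSet_Ioo
    intro t ht
    exact ((hsum ht.1 ht.2).tsum_eq).symm
  rw [e0, ← MeasureTheory.integral_tsum_of_summable_integral_norm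
      (fun n => term_intOn n) ?_]
  · rw [← sum_one_div_sq.tsum_eq]
    exact tsum_congr poly_int
  · apply Summable.congr sum_one_div_sq.summable
    intro n
    rw [← poly_int n]
    apply setIntegral_congr_fun measurableSet_Ioo
    intro t ht
    exact (Real.norm_of_nonneg (term_nonneg n ht)).symm
  
lemma h_intOn_Ioc : IntegrableOn (fun t : ℝ => -Real.log (1 - t) / t) (Ioc 0 1) := by
  rw [integrableOn_Ioc_iff_integrableOn_Ioo]
  exact h_integrableOn

lemma h_intOn_Icc : IntegrableOn (fun t : ℝ => -Real.log (1 - t) / t) (Icc 0 1) := by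
  rw [integrableOn_Icc_iff_integrableOn_Ioc]
  exact h_intOn_Ioc

lemma li2_one : li2 1 = Real.pi ^ 2 / 6 := by
  unfold li2
  rw [intervalIntegral.integral_of_le zero_le_one, integral_Ioc_eq_integral_Ioo]
  exact h_int_value

lemma li2_zero : li2 0 = 0 := intervalIntegral.integral_same

lemma li2_cont : ContinuousOn li2 (Icc 0 1) := by
  have h := intervalIntegral.continuousOn_primitive_interval (a := (0:ℝ)) (b := 1)
    (μ := volume) (f := fun t : ℝ => -Real.log (1 - t) / t)
    (by rw [uIcc_of_le zero_le_one]; exact h_intOn_Icc)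
  rwa [uIcc_of_le zero_le_one] at h

lemma li2_deriv {x : ℝ} (hx : x ∈ Ioo (0:ℝ) 1) :
    HasDerivAt li2 (-Real.log (1 - x) / x) x := by
  apply intervalIntegral.integral_hasDerivAt_right
  · rw [intervalIntegrable_iff_integrableOn_Ioc_of_le hx.1.le]
    exact h_intOn_Ioc.mono_set (Ioc_subset_Ioc le_rfl hx.2.le)
  · exact hfun_meas.stronglyMeasurable.stronglyMeasurableAtFilter
  · have h1 : (1:ℝ) - x ≠ 0 := by have := hx.2; intro h; linarith
    have h2 : x ≠ 0 := ne_of_gt hx.1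
    exact (((Real.continuousAt_log h1).comp
      ((continuous_const.sub continuous_id).continuousAt)).neg).div continuousAt_id h2


lemma powMem {v : ℝ} (hv : v ∈ Ioo (0:ℝ) 1) (n : ℕ) (hn : n ≠ 0) : v ^ n ∈ Ioo (0:ℝ) 1 :=
  ⟨pow_pos hv.1 n, pow_lt_one₀ hv.1.le hv.2 hn⟩

lemma Gt_deriv {v : ℝ} (hv : v ∈ Ioo (0:ℝ) 1) :
    HasDerivAt Gt (Real.log (v ^ 2 - v + 1) / v) v := by
  have h0 : v ≠ 0 := ne_of_gt hv.1
  have c2 : HasDerivAt (fun w : ℝ => li2 (w ^ 2))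
      (-Real.log (1 - v ^ 2) / v ^ 2 * ((2:ℕ) * v ^ (2 - 1))) v :=
    HasDerivAt.comp (h₂ := li2) (h := fun w : ℝ => w ^ 2) v
      (li2_deriv (powMem hv 2 (by norm_num))) (hasDerivAt_pow 2 v)
  have c6 : HasDerivAt (fun w : ℝ => li2 (w ^ 6))
      (-Real.log (1 - v ^ 6) / v ^ 6 * ((6:ℕ) * v ^ (6 - 1))) v :=
    HasDerivAt.comp (h₂ := li2) (h := fun w : ℝ => w ^ 6) v
      (li2_deriv (powMem hv 6 (by norm_num))) (hasDerivAt_pow 6 v)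
  have c3 : HasDerivAt (fun w : ℝ => li2 (w ^ 3))
      (-Real.log (1 - v ^ 3) / v ^ 3 * ((3:ℕ) * v ^ (3 - 1))) v :=
    HasDerivAt.comp (h₂ := li2) (h := fun w : ℝ => w ^ 3) v
      (li2_deriv (powMem hv 3 (by norm_num))) (hasDerivAt_pow 3 v)
  have d2 := c2.div_const 2
  have d1 := li2_deriv hv
  have d6 := c6.div_const 6
  have d3 := c3.div_const 3
  have H := ((d2.sub d1).sub d6).add d3
  convert H using 1
  any_goals rfl
  have e1 : (1:ℝ) - v ≠ 0 := by have := hv.2; intro h; linarith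
  have e2 : (1:ℝ) + v ≠ 0 := by have := hv.1; intro h; linarith
  have e3 : (1:ℝ) - v ^ 3 ≠ 0 := by
    have := (powMem hv 3 (by norm_num)).2; intro h; linarith
  have hQ : (v ^ 2 - v + 1) ≠ 0 := ne_of_gt (Qpos' v)
  rw [show (1:ℝ) - v ^ 2 = (1 - v) * (1 + v) by ring,
      show (1:ℝ) - v ^ 6 = (1 - v ^ 3) * ((1 + v) * (v ^ 2 - v + 1)) by ring,
      Real.log_mul e1 e2, Real.log_mul e3 (mul_ne_zero e2 hQ), Real.log_mul e2 hQ]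
  field_simp
  ring


section psiSec
variable {w : ℝ} (hw : w ∈ Ioo (0:ℝ) 1)
include hw

lemma cube_pos : (0:ℝ) < 1 + w ^ 3 := by nlinarith [pow_pos hw.1 3]
lemma sq1_pos : (0:ℝ) < 1 - w ^ 2 := by nlinarith [hw.1, hw.2, sq_nonneg w]

lemma psi_deriv : HasDerivAt psi (DF1 w) w := by
  have h3 : (1:ℝ) + w ^ 3 ≠ 0 := ne_of_gt (cube_pos hw)
  have h2 : (1:ℝ) - w ^ 2 ≠ 0 := ne_of_gt (sq1_pos hw)
  have a3 : HasDerivAt (fun w : ℝ => 1 + w ^ 3) ((3:ℕ) * w ^ (3 - 1)) w :=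
    (hasDerivAt_pow 3 w).const_add 1
  have a2 : HasDerivAt (fun w : ℝ => 1 - w ^ 2) (-((2:ℕ) * w ^ (2 - 1))) w :=
    (hasDerivAt_pow 2 w).const_sub 1
  have H := (a3.log h3).sub (a2.log h2)
  convert H using 1
  any_goals rfl
  unfold DF1
  push_cast
  rw [neg_div]
  ring

lemma DF1_pos : 0 < DF1 w := by
  unfold DF1
  have h1 := hw.1
  have h3 := cube_pos hw
  have h2 := sq1_pos hw
  positivity

lemma psi_pos : 0 < psi w := by
  unfold psi
  have l1 : 0 < Real.log (1 + w ^ 3) := Real.log_pos (by nlinarith [pow_pos hw.1 3])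
  have l2 : Real.log (1 - w ^ 2) < 0 :=
    Real.log_neg (sq1_pos hw) (by nlinarith [pow_pos hw.1 2])
  linarith

lemma gfun_psi : gfun (psi w) = Real.log (w ^ 2 - w + 1) - Real.log w := by
  have h3 : (0:ℝ) < 1 + w ^ 3 := cube_pos hw
  have h2 : (0:ℝ) < 1 - w ^ 2 := sq1_pos hw
  have hQ : (0:ℝ) < w ^ 2 - w + 1 := Qpos' w
  have hQne : (w ^ 2 - w + 1 : ℝ) ≠ 0 := ne_of_gt hQ
  have e1 : Real.exp (-psi w) = (1 - w ^ 2) / (1 + w ^ 3) := by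
    unfold psi
    rw [neg_sub, Real.exp_sub, Real.exp_log h2, Real.exp_log h3]
  have e2 : 1 - Real.exp (-psi w) = w ^ 2 / (w ^ 2 - w + 1) := by
    rw [e1]
    have h3ne : (1 + w ^ 3 : ℝ) ≠ 0 := ne_of_gt h3
    rw [one_sub_div h3ne, div_eq_div_iff h3ne hQne]
    ring
  have e3 : w ^ 2 / (w ^ 2 - w + 1) * (4 - 3 * (w ^ 2 / (w ^ 2 - w + 1)))
      = (w * (2 - w) / (w ^ 2 - w + 1)) ^ 2 := by
    rw [div_pow, eq_div_iff (pow_ne_zero 2 hQne)]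
    obtain ⟨Q, hq⟩ : ∃ Q, Q = w ^ 2 - w + 1 := ⟨_, rfl⟩
    rw [← hq] at hQne ⊢
    field_simp
    rw [hq]
    ring
  have e4 : beta (w ^ 2 / (w ^ 2 - w + 1)) = w / (w ^ 2 - w + 1) := by
    unfold beta
    have hw1 : 0 < w := hw.1
    have hw2 : w < 1 := hw.2
    have h2w : (0:ℝ) < 2 - w := by linarith
    rw [e3, Real.sqrt_sq (by positivity : (0:ℝ) ≤ w * (2 - w) / (w ^ 2 - w + 1))]
    field_simp
    ring
  unfold gfun
  rw [e2, e4, Real.log_div (ne_of_gt hw.1) hQne]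
  ring

end psiSec

lemma psi_mono : StrictMonoOn psi (Ioo (0:ℝ) 1) := by
  apply strictMonoOn_of_deriv_pos (convex_Ioo _ _)
  · intro x hx
    exact ((psi_deriv hx).continuousAt).continuousWithinAt
  · intro x hx
    rw [interior_Ioo] at hx
    rw [(psi_deriv hx).deriv]
    exact DF1_pos hx

lemma psi_image : psi '' Ioo 0 1 = Ioi 0 := by
  apply Subset.antisymm
  · rintro _ ⟨w, hw, rfl⟩
    exact psi_pos hw
  · intro z hz
    have hz' : (0:ℝ) < z := hz
    -- find a near 0
    have hc : ContinuousAt psi 0 := by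
      have : ContinuousAt (fun w : ℝ => Real.log (1 + w ^ 3) - Real.log (1 - w ^ 2)) 0 := by
        apply ContinuousAt.sub
        · exact (Real.continuousAt_log (by norm_num)).comp (by fun_prop)
        · exact (Real.continuousAt_log (by norm_num)).comp (by fun_prop)
      exact this
    have h0 : psi 0 = 0 := by simp [psi]
    have hev : ∀ᶠ w in 𝓝[>] (0:ℝ), psi w < z := by
      apply Filter.Tendsto.eventually_lt_const hz'
      have ht : Tendsto psi (𝓝[>] (0:ℝ)) (𝓝 (psi 0)) := hc.continuousWithinAt
      rwa [h0] at ht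
    have hev2 : ∀ᶠ w in 𝓝[>] (0:ℝ), w < 1 :=
      eventually_nhdsWithin_of_eventually_nhds (eventually_lt_nhds one_pos)
    obtain ⟨a, ⟨haz, ha1⟩, ha0⟩ :=
      ((hev.and hev2).and self_mem_nhdsWithin).exists
    -- choose b
    set s : ℝ := Real.sqrt (1 - Real.exp (-z) / 2) with hs
    have hm0 : 0 < Real.exp (-z) := Real.exp_pos _
    have hm1 : Real.exp (-z) < 1 := by
      rw [Real.exp_lt_one_iff]; linarith
    have hs1 : s < 1 := by
      calc s = Real.sqrt (1 - Real.exp (-z) / 2) := hs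
      _ < Real.sqrt 1 := Real.sqrt_lt_sqrt (by linarith) (by linarith)
      _ = 1 := Real.sqrt_one
    set b : ℝ := (max a s + 1) / 2 with hb
    have hab : a < b := by
      have : a ≤ max a s := le_max_left _ _
      have : max a s < 1 := max_lt ha1 hs1
      rw [hb]
      have := le_max_left a s
      linarith
    have hb1 : b < 1 := by
      have : max a s < 1 := max_lt ha1 hs1
      rw [hb]; linarith
    have hsb : s ≤ b := by
      have h1 : s ≤ max a s := le_max_right _ _
      have h2 : max a s ≤ b := by rw [hb]; have := max_lt ha1 hs1; linarith
      linarith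
    have hb0 : 0 < b := lt_trans ha0 hab
    have hbIoo : b ∈ Ioo (0:ℝ) 1 := ⟨hb0, hb1⟩
    have hsq : 1 - b ^ 2 ≤ Real.exp (-z) / 2 := by
      have hs2 : s ^ 2 = 1 - Real.exp (-z) / 2 := Real.sq_sqrt (by linarith)
      have : s ^ 2 ≤ b ^ 2 := by
        apply pow_le_pow_left₀ (Real.sqrt_nonneg _) hsb
      linarith
    have hzb : z < psi b := by
      have hpos2 : (0:ℝ) < 1 - b ^ 2 := sq1_pos hbIoo
      have l1 : Real.log (1 - b ^ 2) < -z := by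
        have : 1 - b ^ 2 < Real.exp (-z) := by linarith
        calc Real.log (1 - b ^ 2) < Real.log (Real.exp (-z)) :=
              Real.log_lt_log hpos2 this
        _ = -z := Real.log_exp _
      have l2 : 0 < Real.log (1 + b ^ 3) := Real.log_pos (by nlinarith [pow_pos hb0 3])
      unfold psi
      linarith
    have hcont : ContinuousOn psi (Icc a b) := by
      intro x hx
      have hx0 : 0 < x := lt_of_lt_of_le ha0 hx.1
      have hx1 : x < 1 := lt_of_le_of_lt hx.2 hb1
      exact ((psi_deriv ⟨hx0, hx1⟩).continuousAt).continuousWithinAt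
    have := intermediate_value_Ioo hab.le hcont
    have hzmem : z ∈ Ioo (psi a) (psi b) := ⟨haz, hzb⟩
    obtain ⟨w, hwab, hwz⟩ := this hzmem
    exact ⟨w, ⟨lt_trans ha0 hwab.1, lt_trans hwab.2 hb1⟩, hwz⟩

lemma oneSub {w : ℝ} (hw : w ∈ Ioo (0:ℝ) 1) : 1 - w ∈ Ioo (0:ℝ) 1 := by
  constructor
  · have := hw.2; linarith
  · have := hw.1; linarith

lemma oneSubDeriv (w : ℝ) : HasDerivAt (fun w : ℝ => 1 - w) (-1) w := by
  simpa using (hasDerivAt_id w).const_sub 1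

lemma Qderiv (w : ℝ) : HasDerivAt (fun w : ℝ => w ^ 2 - w + 1) (2 * w - 1) w := by
  have := ((hasDerivAt_pow 2 w).sub (hasDerivAt_id w)).add_const 1
  convert this using 1
  any_goals rfl
  push_cast
  ring

lemma F_deriv {w : ℝ} (hw : w ∈ Ioo (0:ℝ) 1) : HasDerivAt Ff (DF w) w := by
  have hw0 : w ≠ 0 := ne_of_gt hw.1
  have h1w : (1:ℝ) - w ≠ 0 := ne_of_gt (oneSub hw).1
  have hQ : (w ^ 2 - w + 1 : ℝ) ≠ 0 := ne_of_gt (Qpos' w)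
  have h3 : (1:ℝ) + w ^ 3 ≠ 0 := by nlinarith [pow_pos hw.1 3]
  have h2 : (1:ℝ) - w ^ 2 ≠ 0 := by nlinarith [hw.1, hw.2, sq_nonneg w]
  -- c1 : li2 (1 - w)
  have c1 : HasDerivAt (fun w : ℝ => li2 (1 - w))
      (-Real.log (1 - (1 - w)) / (1 - w) * (-1)) w :=
    HasDerivAt.comp (h₂ := li2) (h := fun w : ℝ => 1 - w) w
      (li2_deriv (oneSub hw)) (oneSubDeriv w)
  -- c2 : log w * log Q
  have cQlog : HasDerivAt (fun w : ℝ => Real.log (w ^ 2 - w + 1))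
      ((2 * w - 1) / (w ^ 2 - w + 1)) w := (Qderiv w).log hQ
  have c2 : HasDerivAt (fun w : ℝ => Real.log w * Real.log (w ^ 2 - w + 1))
      (w⁻¹ * Real.log (w ^ 2 - w + 1)
        + Real.log w * ((2 * w - 1) / (w ^ 2 - w + 1))) w :=
    (Real.hasDerivAt_log hw0).mul cQlog
  -- c3 : Gt w
  have c3 := Gt_deriv hw
  -- c4 : Gt (1 - w)
  have c4 : HasDerivAt (fun w : ℝ => Gt (1 - w))
      (Real.log ((1 - w) ^ 2 - (1 - w) + 1) / (1 - w) * (-1)) w :=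
    HasDerivAt.comp (h₂ := Gt) (h := fun w : ℝ => 1 - w) w
      (Gt_deriv (oneSub hw)) (oneSubDeriv w)
  -- c5 : (log Q)^2/2
  have c5 : HasDerivAt (fun w : ℝ => (Real.log (w ^ 2 - w + 1)) ^ 2 / 2)
      (((2:ℕ) * (Real.log (w ^ 2 - w + 1)) ^ (2 - 1)
        * ((2 * w - 1) / (w ^ 2 - w + 1))) / 2) w :=
    (cQlog.pow 2).div_const 2
  have H := ((((c1.neg).sub c2).add c3).sub c4).add c5
  have : Ff = fun w => -li2 (1 - w) - Real.log w * Real.log (w ^ 2 - w + 1) + Gt w - Gt (1 - w)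
    + (Real.log (w ^ 2 - w + 1)) ^ 2 / 2 := rfl
  rw [this]
  convert H using 1
  any_goals rfl
  rw [show (1:ℝ) - (1 - w) = w by ring,
      show ((1:ℝ) - w) ^ 2 - (1 - w) + 1 = w ^ 2 - w + 1 by ring]
  unfold DF DF1
  have hQform : 3 * w ^ 2 / (1 + w ^ 3) + 2 * w / (1 - w ^ 2)
      = 1 / (1 - w) + (2 * w - 1) / (w ^ 2 - w + 1) := by
    obtain ⟨Q, hq⟩ : ∃ Q, Q = w ^ 2 - w + 1 := ⟨_, rfl⟩
    rw [← hq] at hQ ⊢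
    field_simp
    rw [hq]
    ring
  rw [hQform]
  push_cast
  field_simp
  ring

lemma contQlog : Continuous (fun w : ℝ => Real.log (w ^ 2 - w + 1)) := by
  apply Continuous.log (by fun_prop) (fun x => ne_of_gt (Qpos' x))

lemma cross_tendsto :
    Tendsto (fun w : ℝ => Real.log w * Real.log (w ^ 2 - w + 1)) (𝓝[>] 0) (𝓝 0) := by
  have t1 : Tendsto (fun w : ℝ => Real.log w * w) (𝓝[>] (0:ℝ)) (𝓝 0) := by
    simpa using tendsto_log_mul_rpow_nhdsGT_zero one_pos
  have hd : HasDerivAt (fun w : ℝ => Real.log (w ^ 2 - w + 1)) (-1) 0 := by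
    have h := (Qderiv 0).log (by norm_num)
    convert h using 1
    norm_num
  have t2 : Tendsto (fun w : ℝ => Real.log (w ^ 2 - w + 1) / w) (𝓝[>] (0:ℝ)) (𝓝 (-1)) := by
    have hs := hasDerivAt_iff_tendsto_slope.mp hd
    have hmono : 𝓝[>] (0:ℝ) ≤ 𝓝[≠] (0:ℝ) :=
      nhdsWithin_mono _ (fun x hx => ne_of_gt hx)
    apply (hs.mono_left hmono).congr'
    filter_upwards [self_mem_nhdsWithin] with w hw
    rw [slope_def_field]
    norm_num
  have := t2.mul t1
  norm_num at this
  apply this.congr'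
  filter_upwards [self_mem_nhdsWithin] with w hw
  have hw0 : w ≠ 0 := ne_of_gt hw
  field_simp

lemma cross_cont : ContinuousOn (fun w : ℝ => Real.log w * Real.log (w ^ 2 - w + 1)) (Icc 0 1) := by
  intro x hx
  rcases eq_or_ne x 0 with rfl | hx0
  · unfold ContinuousWithinAt
    rw [show (fun w : ℝ => Real.log w * Real.log (w ^ 2 - w + 1)) 0 = 0 by norm_num]
    have hle : 𝓝[Icc (0:ℝ) 1] 0 ≤ 𝓝[Ici (0:ℝ)] 0 :=
      nhdsWithin_mono _ (fun y hy => hy.1)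
    apply Tendsto.mono_left _ hle
    rw [show Ici (0:ℝ) = insert 0 (Ioi 0) by rw [Ioi_insert], nhdsWithin_insert]
    rw [tendsto_sup]
    constructor
    · rw [tendsto_pure_left]
      intro s hs
      simpa using mem_of_mem_nhds hs
    · exact cross_tendsto
  · exact ((Real.continuousAt_log hx0).mul contQlog.continuousAt).continuousWithinAt

lemma mapsTo_oneSub : MapsTo (fun w : ℝ => 1 - w) (Icc 0 1) (Icc 0 1) := by
  intro x hx
  constructor
  · simp only; linarith [hx.2]
  · simp only; linarith [hx.1]

lemma mapsTo_pow (n : ℕ) : MapsTo (fun w : ℝ => w ^ n) (Icc (0:ℝ) 1) (Icc 0 1) := by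
  intro x hx
  exact ⟨pow_nonneg hx.1 n, pow_le_one₀ hx.1 hx.2⟩

lemma Gt_cont : ContinuousOn Gt (Icc 0 1) := by
  have c : ∀ n : ℕ, ContinuousOn (fun v : ℝ => li2 (v ^ n)) (Icc 0 1) := fun n =>
    li2_cont.comp (continuous_pow n).continuousOn (mapsTo_pow n)
  have c1 : ContinuousOn li2 (Icc (0:ℝ) 1) := li2_cont
  exact (((((c 2).div_const 2).sub c1).sub ((c 6).div_const 6)).add ((c 3).div_const 3))

lemma F_cont : ContinuousOn Ff (Icc 0 1) := by
  have A : ContinuousOn (fun w : ℝ => li2 (1 - w)) (Icc 0 1) :=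
    li2_cont.comp (continuous_const.sub continuous_id).continuousOn mapsTo_oneSub
  have B' : ContinuousOn (fun w : ℝ => Gt (1 - w)) (Icc 0 1) :=
    Gt_cont.comp (continuous_const.sub continuous_id).continuousOn mapsTo_oneSub
  have C : ContinuousOn (fun w : ℝ => (Real.log (w ^ 2 - w + 1)) ^ 2 / 2) (Icc (0:ℝ) 1) :=
    (((contQlog.pow 2).div_const 2)).continuousOn
  exact ((((A.neg.sub cross_cont).add Gt_cont).sub B').add C)

lemma DF_nonneg {w : ℝ} (hw : w ∈ Ioo (0:ℝ) 1) : 0 ≤ DF w := by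
  unfold DF
  apply mul_nonneg (DF1_pos hw).le
  rw [sub_nonneg]
  apply Real.log_le_log hw.1
  nlinarith [sq_nonneg (1 - w)]

/-- `∫_0^∞ g(z) dz = π²/18`. -/
theorem stmt5 : ∫ z in Set.Ioi (0 : ℝ), gfun z = Real.pi ^ 2 / 18 := by
  rw [← psi_image,
    integral_image_eq_integral_abs_deriv_smul measurableSet_Ioo
      (fun x hx => (psi_deriv hx).hasDerivWithinAt) psi_mono.injOn gfun]
  have e1 : ∀ w ∈ Ioo (0:ℝ) 1, |DF1 w| • gfun (psi w) = DF w := by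
    intro w hw
    rw [gfun_psi hw, abs_of_pos (DF1_pos hw), smul_eq_mul]
    rfl
  rw [setIntegral_congr_fun measurableSet_Ioo e1]
  have hint : IntervalIntegrable DF volume 0 1 := by
    rw [intervalIntegrable_iff_integrableOn_Ioc_of_le zero_le_one]
    exact intervalIntegral.integrableOn_deriv_of_nonneg F_cont (fun x hx => F_deriv hx)
      (fun x hx => DF_nonneg hx)
  have := intervalIntegral.integral_eq_sub_of_hasDeriv_right_of_le zero_le_one F_cont
    (fun x hx => (F_deriv hx).hasDerivWithinAt) hint
  rw [intervalIntegral.integral_of_le zero_le_one, integral_Ioc_eq_integral_Ioo] at this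
  rw [this]
  unfold Ff Gt
  norm_num [li2_zero, li2_one, Real.log_one]
  ring
end

section
/- There exists δ > 0 such that for any p ∈ (0,1) and any rectangle R ⊆ Z² with dimensions (a,b), a ≤ b and ap ≤ δ, the probability (under independent site percolation with density p) that R is internally spanned under 2-neighbour bootstrap percolation is at most 3^{a+b}·exp(-(a+b)·g(aq)), where q = -log(1-p) and g(z) = -log(β(1-e^{-z})), β(u) = (u + sqrt(u(4-3u)))/2. -/
open scoped Classical

def nbr (v w : ℤ × ℤ) : Prop := |w.1 - v.1| + |w.2 - v.2| = 1

def bootClosure (A : Set (ℤ × ℤ)) : Set (ℤ × ℤ) :=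
  ⋂₀ {B | A ⊆ B ∧ ∀ v : ℤ × ℤ, 2 ≤ ({w | nbr v w} ∩ B).ncard → v ∈ B}

def rectZ (x0 y0 x1 y1 : ℤ) : Set (ℤ × ℤ) :=
  {v | x0 ≤ v.1 ∧ v.1 ≤ x1 ∧ y0 ≤ v.2 ∧ v.2 ≤ y1}

/-- The rectangle `[(x0,y0),(x1,y1)]` as a finite set. -/
noncomputable def rectF (x0 y0 x1 y1 : ℤ) : Finset (ℤ × ℤ) := Finset.Icc x0 x1 ×ˢ Finset.Icc y0 y1

/-- The probability, when each site of `R` is included independently with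
probability `p`, that the random subset lies in the event `E`. -/
noncomputable def probOn (p : ℝ) (R : Finset (ℤ × ℤ)) (E : Finset (ℤ × ℤ) → Prop) : ℝ :=
  ∑ A ∈ R.powerset, p ^ A.card * (1 - p) ^ (R.card - A.card) * (if E A then 1 else 0)

lemma abs_one_iff (x y : ℤ) : |x| + |y| = 1 ↔ (x=1∧y=0)∨(x=-1∧y=0)∨(x=0∧y=1)∨(x=0∧y=-1) := by
  rw [Int.abs_eq_natAbs, Int.abs_eq_natAbs]; omega

lemma nbr_iff (v w : ℤ × ℤ) : nbr v w ↔ w = (v.1+1, v.2) ∨ w = (v.1-1,v.2) ∨ w = (v.1,v.2+1) ∨ w = (v.1,v.2-1) := by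
  unfold nbr; rw [abs_one_iff]; simp only [Prod.ext_iff]; omega

lemma nbr_comm (v w : ℤ × ℤ) : nbr v w ↔ nbr w v := by
  unfold nbr; rw [abs_one_iff, abs_one_iff]; omega

lemma not_nbr_self (v : ℤ × ℤ) : ¬ nbr v v := by simp [nbr]

noncomputable def degS (S : Finset (ℤ×ℤ)) (v : ℤ×ℤ) : ℕ := (S.filter (fun w => nbr v w)).card

noncomputable def per (S : Finset (ℤ×ℤ)) : ℤ := ∑ v ∈ S, (4 - (degS S v : ℤ))

lemma degS_mono {S T : Finset (ℤ×ℤ)} (h : S ⊆ T) (v : ℤ×ℤ) : degS S v ≤ degS T v :=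
  Finset.card_le_card (Finset.filter_subset_filter _ h)

lemma degS_insert_self {S : Finset (ℤ×ℤ)} {v : ℤ×ℤ} : degS (insert v S) v = degS S v := by
  unfold degS
  rw [Finset.filter_insert, if_neg (not_nbr_self v)]

lemma degS_insert_other {S : Finset (ℤ×ℤ)} {v w : ℤ×ℤ} (hv : v ∉ S) :
    (degS (insert v S) w : ℤ) = degS S w + (if nbr w v then 1 else 0) := by
  unfold degS
  rw [Finset.filter_insert]
  split
  · rw [Finset.card_insert_of_notMem (fun hm => hv (Finset.mem_of_mem_filter _ hm))]
    push_cast; ring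
  · simp

lemma sum_ite_nbr (S : Finset (ℤ×ℤ)) (v : ℤ×ℤ) :
    ∑ w ∈ S, (if nbr w v then (1:ℤ) else 0) = degS S v := by
  rw [Finset.sum_ite, Finset.sum_const, Finset.sum_const]
  unfold degS
  have : S.filter (fun w => nbr w v) = S.filter (fun w => nbr v w) :=
    Finset.filter_congr fun w _ => by rw [nbr_comm]
  simp [this]

lemma per_insert {S : Finset (ℤ×ℤ)} {v : ℤ×ℤ} (hv : v ∉ S) :
    per (insert v S) = per S + 4 - 2 * degS S v := by
  unfold per
  rw [Finset.sum_insert hv, degS_insert_self]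
  have : ∑ w ∈ S, (4 - (degS (insert v S) w : ℤ)) =
      ∑ w ∈ S, ((4 - (degS S w : ℤ)) - (if nbr w v then 1 else 0)) := by
    refine Finset.sum_congr rfl fun w _ => ?_
    rw [degS_insert_other hv]; ring
  rw [this, Finset.sum_sub_distrib, sum_ite_nbr]
  ring


def Step (S T : Finset (ℤ×ℤ)) : Prop := ∃ v, v ∉ S ∧ 2 ≤ degS S v ∧ T = insert v S

def Reach (A S : Finset (ℤ×ℤ)) : Prop := Relation.ReflTransGen Step A S

lemma step_per {S T : Finset (ℤ×ℤ)} (h : Step S T) : per T ≤ per S := by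
  obtain ⟨v, hv, hd, rfl⟩ := h
  rw [per_insert hv]
  have : (2:ℤ) ≤ degS S v := by exact_mod_cast hd
  linarith

lemma reach_per {A S : Finset (ℤ×ℤ)} (h : Reach A S) : per S ≤ per A := by
  induction h with
  | refl => exact le_refl _
  | tail _ hstep ih => exact le_trans (step_per hstep) ih

lemma per_le_card (A : Finset (ℤ×ℤ)) : per A ≤ 4 * A.card := by
  unfold per
  calc ∑ v ∈ A, (4 - (degS A v : ℤ)) ≤ ∑ v ∈ A, 4 := by
        refine Finset.sum_le_sum fun v _ => ?_
        have : (0:ℤ) ≤ degS A v := Int.natCast_nonneg _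
        linarith
    _ = 4 * A.card := by rw [Finset.sum_const]; ring

lemma reach_subset {A S : Finset (ℤ×ℤ)} (h : Reach A S) : A ⊆ S := by
  induction h with
  | refl => exact Finset.Subset.refl _
  | tail _ hstep ih =>
      obtain ⟨v, hv, hd, rfl⟩ := hstep
      exact ih.trans (Finset.subset_insert _ _)

lemma reach_union {A S T : Finset (ℤ×ℤ)} (hS : Reach A S) (hT : Reach A T) :
    Reach A (S ∪ T) := by
  induction hT with
  | refl => rwa [Finset.union_eq_left.2 (reach_subset hS)]
  | @tail T' T'' hT' hstep ih =>
      obtain ⟨v, hv, hd, rfl⟩ := hstep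
      rw [Finset.union_insert]
      by_cases hvm : v ∈ S ∪ T'
      · rwa [Finset.insert_eq_self.2 hvm]
      · exact ih.tail ⟨v, hvm, le_trans hd (degS_mono Finset.subset_union_right v), rfl⟩

lemma two_le_degS {S : Finset (ℤ×ℤ)} {v w1 w2 : ℤ×ℤ} (h1 : w1 ∈ S) (h2 : w2 ∈ S)
    (hn1 : nbr v w1) (hn2 : nbr v w2) (hne : w1 ≠ w2) : 2 ≤ degS S v := by
  refine Finset.one_lt_card.2 ⟨w1, ?_, w2, ?_, hne⟩ <;>
    simp [Finset.mem_filter, h1, h2, hn1, hn2]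

/-- the union of all sets reachable from `A` -/
def reachSet (A : Finset (ℤ×ℤ)) : Set (ℤ×ℤ) := {v | ∃ S, Reach A S ∧ v ∈ S}

lemma nbr_finite (v : ℤ×ℤ) : {w | nbr v w}.Finite := by
  apply Set.Finite.subset (s := {(v.1+1, v.2),(v.1-1,v.2),(v.1,v.2+1),(v.1,v.2-1)})
    (Set.toFinite _)
  intro w hw
  rcases (nbr_iff v w).1 hw with h|h|h|h <;> simp [h]

lemma bootClosure_subset_reachSet (A : Finset (ℤ×ℤ)) :
    bootClosure ↑A ⊆ reachSet A := by
  apply Set.sInter_subset_of_mem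
  constructor
  · intro v hv
    exact ⟨A, Relation.ReflTransGen.refl, hv⟩
  · intro v hv
    have hfin : ({w | nbr v w} ∩ reachSet A).Finite := (nbr_finite v).inter_of_left _
    obtain ⟨w1, hw1, w2, hw2, hne⟩ := (Set.one_lt_ncard hfin).1 hv
    obtain ⟨hn1, S1, hS1, hm1⟩ := hw1
    obtain ⟨hn2, S2, hS2, hm2⟩ := hw2
    have hS3 : Reach A (S1 ∪ S2) := reach_union hS1 hS2
    have hd : 2 ≤ degS (S1 ∪ S2) v :=
      two_le_degS (Finset.mem_union_left _ hm1) (Finset.mem_union_right _ hm2) hn1 hn2 hne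
    by_cases hvm : v ∈ S1 ∪ S2
    · exact ⟨_, hS3, hvm⟩
    · exact ⟨_, hS3.tail ⟨v, hvm, hd, rfl⟩, Finset.mem_insert_self _ _⟩



lemma mem_rectF {x0 y0 x1 y1 : ℤ} {v : ℤ×ℤ} :
    v ∈ rectF x0 y0 x1 y1 ↔ x0 ≤ v.1 ∧ v.1 ≤ x1 ∧ y0 ≤ v.2 ∧ v.2 ≤ y1 := by
  simp [rectF, Finset.mem_Icc, and_assoc]

lemma mem_rect_of_two_nbrs {x0 y0 x1 y1 : ℤ} {v w1 w2 : ℤ×ℤ}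
    (h1 : w1 ∈ rectF x0 y0 x1 y1) (h2 : w2 ∈ rectF x0 y0 x1 y1)
    (hn1 : nbr v w1) (hn2 : nbr v w2) (hne : w1 ≠ w2) : v ∈ rectF x0 y0 x1 y1 := by
  rw [mem_rectF] at *
  rw [nbr_iff] at hn1 hn2
  have hne' : w1.1 ≠ w2.1 ∨ w1.2 ≠ w2.2 := by
    by_contra h; push_neg at h; exact hne (Prod.ext h.1 h.2)
  rcases hn1 with h|h|h|h <;> rcases hn2 with h'|h'|h'|h' <;>
    rw [h] at h1 <;> rw [h'] at h2 <;> simp only [h, h', Prod.ext_iff] at hne' ⊢ <;>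
    simp only [] at h1 h2 hne' <;> constructor <;> try constructor
  all_goals omega

lemma coe_rectF (x0 y0 x1 y1 : ℤ) : (↑(rectF x0 y0 x1 y1) : Set (ℤ×ℤ)) = rectZ x0 y0 x1 y1 := by
  ext v; simp [mem_rectF, rectZ]

lemma reach_subset_rect {x0 y0 x1 y1 : ℤ} {A S : Finset (ℤ×ℤ)}
    (hA : A ⊆ rectF x0 y0 x1 y1) (h : Reach A S) : S ⊆ rectF x0 y0 x1 y1 := by
  induction h with
  | refl => exact hA
  | @tail T' T'' hT' hstep ih =>
      obtain ⟨v, hv, hd, rfl⟩ := hstep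
      intro w hw
      rcases Finset.mem_insert.1 hw with rfl | hw'
      · obtain ⟨w1, hw1, w2, hw2, hne⟩ := Finset.one_lt_card.1 hd
        rw [Finset.mem_filter] at hw1 hw2
        exact mem_rect_of_two_nbrs (ih hw1.1) (ih hw2.1) hw1.2 hw2.2 hne
      · exact ih hw'

lemma exists_reach_superset {A : Finset (ℤ×ℤ)} (F : Finset (ℤ×ℤ))
    (h : ∀ v ∈ F, v ∈ reachSet A) : ∃ S, Reach A S ∧ F ⊆ S := by
  classical
  induction F using Finset.induction_on with
  | empty => exact ⟨A, Relation.ReflTransGen.refl, Finset.empty_subset _⟩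
  | @insert v F hv ih =>
      obtain ⟨S, hS, hFS⟩ := ih (fun w hw => h w (Finset.mem_insert_of_mem hw))
      obtain ⟨T, hT, hvT⟩ := h v (Finset.mem_insert_self _ _)
      refine ⟨S ∪ T, reach_union hS hT, ?_⟩
      intro w hw
      rcases Finset.mem_insert.1 hw with rfl | hw'
      · exact Finset.mem_union_right _ hvT
      · exact Finset.mem_union_left _ (hFS hw')

lemma degS_rect {x0 y0 x1 y1 : ℤ} {v : ℤ×ℤ} (hv : v ∈ rectF x0 y0 x1 y1) :
    (degS (rectF x0 y0 x1 y1) v : ℤ) =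
      (if x0 < v.1 then 1 else 0) + (if v.1 < x1 then 1 else 0) +
      (if y0 < v.2 then 1 else 0) + (if v.2 < y1 then 1 else 0) := by
  rw [mem_rectF] at hv
  obtain ⟨ha, hb, hc, hd⟩ := hv
  have hfe : (rectF x0 y0 x1 y1).filter (fun w => nbr v w) =
      ({(v.1-1,v.2),(v.1+1,v.2),(v.1,v.2-1),(v.1,v.2+1)} : Finset (ℤ×ℤ)).filter
        (fun w => w ∈ rectF x0 y0 x1 y1) := by
    ext w
    simp only [Finset.mem_filter, Finset.mem_insert, Finset.mem_singleton, nbr_iff]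
    tauto
  unfold degS
  rw [hfe, Finset.card_filter]
  have d1 : ((v.1-1,v.2) : ℤ×ℤ) ∉ ({(v.1+1,v.2),(v.1,v.2-1),(v.1,v.2+1)} : Finset (ℤ×ℤ)) := by
    intro h; simp only [Finset.mem_insert, Finset.mem_singleton, Prod.mk.injEq] at h; omega
  have d2 : ((v.1+1,v.2) : ℤ×ℤ) ∉ ({(v.1,v.2-1),(v.1,v.2+1)} : Finset (ℤ×ℤ)) := by
    intro h; simp only [Finset.mem_insert, Finset.mem_singleton, Prod.mk.injEq] at h; omega
  have d3 : ((v.1,v.2-1) : ℤ×ℤ) ∉ ({(v.1,v.2+1)} : Finset (ℤ×ℤ)) := by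
    intro h; simp only [Finset.mem_singleton, Prod.mk.injEq] at h; omega
  rw [Finset.sum_insert d1, Finset.sum_insert d2, Finset.sum_insert d3, Finset.sum_singleton]
  have m1 : (((v.1-1,v.2) : ℤ×ℤ) ∈ rectF x0 y0 x1 y1) ↔ x0 < v.1 := by
    rw [mem_rectF]; show (x0 ≤ v.1 - 1 ∧ v.1 - 1 ≤ x1 ∧ y0 ≤ v.2 ∧ v.2 ≤ y1) ↔ _; omega
  have m2 : (((v.1+1,v.2) : ℤ×ℤ) ∈ rectF x0 y0 x1 y1) ↔ v.1 < x1 := by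
    rw [mem_rectF]; show (x0 ≤ v.1 + 1 ∧ v.1 + 1 ≤ x1 ∧ y0 ≤ v.2 ∧ v.2 ≤ y1) ↔ _; omega
  have m3 : (((v.1,v.2-1) : ℤ×ℤ) ∈ rectF x0 y0 x1 y1) ↔ y0 < v.2 := by
    rw [mem_rectF]; show (x0 ≤ v.1 ∧ v.1 ≤ x1 ∧ y0 ≤ v.2 - 1 ∧ v.2 - 1 ≤ y1) ↔ _; omega
  have m4 : (((v.1,v.2+1) : ℤ×ℤ) ∈ rectF x0 y0 x1 y1) ↔ v.2 < y1 := by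
    rw [mem_rectF]; show (x0 ≤ v.1 ∧ v.1 ≤ x1 ∧ y0 ≤ v.2 + 1 ∧ v.2 + 1 ≤ y1) ↔ _; omega
  push_cast
  rw [if_congr m1 rfl rfl, if_congr m2 rfl rfl, if_congr m3 rfl rfl, if_congr m4 rfl rfl]; ring

lemma per_rect {x0 y0 x1 y1 : ℤ} (hx : x0 ≤ x1) (hy : y0 ≤ y1) :
    per (rectF x0 y0 x1 y1) = 2 * (x1 - x0 + 1) + 2 * (y1 - y0 + 1) := by
  unfold per
  have hpt : ∀ v ∈ rectF x0 y0 x1 y1, (4 - (degS (rectF x0 y0 x1 y1) v : ℤ)) =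
      ((if v.1 = x0 then (1:ℤ) else 0) + (if v.1 = x1 then 1 else 0) +
       (if v.2 = y0 then 1 else 0) + (if v.2 = y1 then 1 else 0)) := by
    intro v hv
    rw [degS_rect hv]
    rw [mem_rectF] at hv
    split_ifs <;> omega
  rw [Finset.sum_congr rfl hpt]
  have cy : ((Finset.Icc y0 y1).card : ℤ) = y1 - y0 + 1 := by
    rw [Int.card_Icc]; omega
  have cx : ((Finset.Icc x0 x1).card : ℤ) = x1 - x0 + 1 := by
    rw [Int.card_Icc]; omega
  rw [rectF, Finset.sum_product]
  simp only [Finset.sum_add_distrib]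
  have A0 : ∑ x ∈ Finset.Icc x0 x1, ∑ _y ∈ Finset.Icc y0 y1, (if x = x0 then (1:ℤ) else 0)
      = y1 - y0 + 1 := by
    have h1 : ∀ x ∈ Finset.Icc x0 x1, ∑ _y ∈ Finset.Icc y0 y1, (if x = x0 then (1:ℤ) else 0)
        = if x = x0 then (y1-y0+1:ℤ) else 0 := by
      intro x _; split_ifs <;> simp <;> omega
    rw [Finset.sum_congr rfl h1, Finset.sum_ite_eq' (Finset.Icc x0 x1) x0 fun _ => (y1-y0+1:ℤ)]
    simp [hx]
  have A1 : ∑ x ∈ Finset.Icc x0 x1, ∑ _y ∈ Finset.Icc y0 y1, (if x = x1 then (1:ℤ) else 0)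
      = y1 - y0 + 1 := by
    have h1 : ∀ x ∈ Finset.Icc x0 x1, ∑ _y ∈ Finset.Icc y0 y1, (if x = x1 then (1:ℤ) else 0)
        = if x = x1 then (y1-y0+1:ℤ) else 0 := by
      intro x _; split_ifs <;> simp <;> omega
    rw [Finset.sum_congr rfl h1, Finset.sum_ite_eq' (Finset.Icc x0 x1) x1 fun _ => (y1-y0+1:ℤ)]
    simp [hx]
  have B0 : ∑ _x ∈ Finset.Icc x0 x1, ∑ y ∈ Finset.Icc y0 y1, (if y = y0 then (1:ℤ) else 0)
      = x1 - x0 + 1 := by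
    have h1 : ∀ x ∈ Finset.Icc x0 x1, ∑ y ∈ Finset.Icc y0 y1, (if y = y0 then (1:ℤ) else 0)
        = 1 := by
      intro x _
      rw [Finset.sum_ite_eq' (Finset.Icc y0 y1) y0 fun _ => (1:ℤ)]
      simp [hy]
    rw [Finset.sum_congr rfl h1, Finset.sum_const, nsmul_eq_mul, cx]; ring
  have B1 : ∑ _x ∈ Finset.Icc x0 x1, ∑ y ∈ Finset.Icc y0 y1, (if y = y1 then (1:ℤ) else 0)
      = x1 - x0 + 1 := by
    have h1 : ∀ x ∈ Finset.Icc x0 x1, ∑ y ∈ Finset.Icc y0 y1, (if y = y1 then (1:ℤ) else 0)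
        = 1 := by
      intro x _
      rw [Finset.sum_ite_eq' (Finset.Icc y0 y1) y1 fun _ => (1:ℤ)]
      simp [hy]
    rw [Finset.sum_congr rfl h1, Finset.sum_const, nsmul_eq_mul, cx]; ring
  rw [A0, A1, B0, B1]; ring

lemma span_card {x0 y0 x1 y1 : ℤ} (hx : x0 ≤ x1) (hy : y0 ≤ y1) {A : Finset (ℤ×ℤ)}
    (hA : A ⊆ rectF x0 y0 x1 y1) (hspan : rectZ x0 y0 x1 y1 ⊆ bootClosure ↑A) :
    (x1 - x0 + 1) + (y1 - y0 + 1) ≤ 2 * (A.card : ℤ) := by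
  have hmem : ∀ v ∈ rectF x0 y0 x1 y1, v ∈ reachSet A := by
    intro v hv
    refine bootClosure_subset_reachSet A (hspan ?_)
    rw [← coe_rectF]
    exact hv
  obtain ⟨S, hS, hsub⟩ := exists_reach_superset _ hmem
  have hSrect : S ⊆ rectF x0 y0 x1 y1 := reach_subset_rect hA hS
  have heq : S = rectF x0 y0 x1 y1 := Finset.Subset.antisymm hSrect hsub
  have h1 : per (rectF x0 y0 x1 y1) ≤ per A := heq ▸ reach_per hS
  have h2 := per_le_card A
  have h3 := per_rect hx hy
  linarith

lemma span_card_nat (x0 y0 : ℤ) (a b : ℕ) (ha : 0 < a) (hb : 0 < b) {A : Finset (ℤ×ℤ)}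
    (hA : A ⊆ rectF x0 y0 (x0 + a - 1) (y0 + b - 1))
    (hspan : rectZ x0 y0 (x0 + a - 1) (y0 + b - 1) ⊆ bootClosure ↑A) :
    a + b ≤ 2 * A.card := by
  have hx : x0 ≤ x0 + a - 1 := by omega
  have hy : y0 ≤ y0 + b - 1 := by omega
  have := span_card hx hy hA hspan
  omega


lemma prob_le_choose {p : ℝ} (hp0 : 0 ≤ p) (hp1 : p ≤ 1) (R : Finset (ℤ × ℤ))
    (E : Finset (ℤ × ℤ) → Prop) (m : ℕ) (hm : m ≤ R.card)
    (hE : ∀ A ∈ R.powerset, E A → m ≤ A.card) :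
    probOn p R E ≤ (R.card.choose m : ℝ) * p ^ m := by
  set n := R.card with hn
  have hq0 : (0:ℝ) ≤ 1 - p := by linarith
  have step1 : probOn p R E ≤
      ∑ A ∈ R.powerset, p ^ A.card * (1 - p) ^ (n - A.card) * (if m ≤ A.card then 1 else 0) := by
    refine Finset.sum_le_sum fun A hA => ?_
    by_cases hEA : E A
    · rw [if_pos hEA, if_pos (hE A hA hEA)]
    · rw [if_neg hEA, mul_zero]
      split_ifs
      · positivity
      · rw [mul_zero]
  have step2 : ∑ A ∈ R.powerset, p ^ A.card * (1 - p) ^ (n - A.card) * (if m ≤ A.card then 1 else 0)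
      = ∑ k ∈ Finset.range (n+1), (n.choose k : ℝ) *
          (p ^ k * (1 - p) ^ (n - k) * (if m ≤ k then 1 else 0)) := by
    rw [Finset.sum_powerset_apply_card (fun k => p ^ k * (1 - p) ^ (n - k) * (if m ≤ k then 1 else 0))]
    simp [nsmul_eq_mul]
    rfl
  have key : ∀ k ∈ Finset.range (n+1), (n.choose k : ℝ) *
          (p ^ k * (1 - p) ^ (n - k) * (if m ≤ k then 1 else 0)) ≤
        (n.choose m : ℝ) * p ^ m *
          (if m ≤ k then ((n-m).choose (k-m) : ℝ) * p ^ (k-m) * (1-p) ^ ((n-m)-(k-m)) else 0) := by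
    intro k hk
    rw [Finset.mem_range] at hk
    by_cases hmk : m ≤ k
    · rw [if_pos hmk, if_pos hmk]
      have hkn : k ≤ n := by omega
      have hc : (n.choose k : ℝ) ≤ (n.choose m : ℝ) * ((n-m).choose (k-m) : ℝ) := by
        have h1 : n.choose k ≤ n.choose m * (n-m).choose (k-m) := by
          have := Nat.choose_mul (n := n) hmk
          nlinarith [Nat.choose_pos hmk, Nat.le_of_lt_succ hk]
        exact_mod_cast h1
      have hpk : p ^ k = p ^ m * p ^ (k - m) := by
        rw [← pow_add]; congr 1; omega
      have hnk : (n - k) = (n-m) - (k-m) := by omega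
      rw [hpk, hnk, mul_one]
      have hnn : (0:ℝ) ≤ p ^ m * p^(k-m) * (1-p)^((n-m)-(k-m)) := by positivity
      calc (n.choose k : ℝ) * (p ^ m * p ^ (k - m) * (1 - p) ^ (n - m - (k - m)))
          ≤ (n.choose m : ℝ) * ((n-m).choose (k-m) : ℝ) * (p ^ m * p ^ (k - m) * (1 - p) ^ (n - m - (k - m))) :=
            mul_le_mul_of_nonneg_right hc hnn
        _ = (n.choose m : ℝ) * p ^ m * (((n-m).choose (k-m) : ℝ) * p ^ (k-m) * (1-p) ^ ((n-m)-(k-m))) := by ring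
    · rw [if_neg hmk, if_neg hmk]
      simp
  have step3 : ∑ k ∈ Finset.range (n+1),
        (if m ≤ k then ((n-m).choose (k-m) : ℝ) * p ^ (k-m) * (1-p) ^ ((n-m)-(k-m)) else 0) = 1 := by
    rw [Finset.sum_ite, Finset.sum_const, smul_zero, add_zero]
    have hfil : Finset.filter (fun k => m ≤ k) (Finset.range (n+1)) = Finset.Ico m (n+1) := by
      ext k; simp [Finset.mem_range, Finset.mem_Ico]; omega
    rw [hfil, Finset.sum_Ico_eq_sum_range]
    have hrw : ∀ i ∈ Finset.range (n+1-m), ((n-m).choose (m+i-m) : ℝ) * p ^ (m+i-m) *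
        (1-p) ^ ((n-m)-(m+i-m)) = p ^ i * (1-p) ^ ((n-m)-i) * ((n-m).choose i : ℝ) := by
      intro i _
      have h : m + i - m = i := by omega
      rw [h]; ring
    rw [Finset.sum_congr rfl hrw]
    have hN : n + 1 - m = (n-m) + 1 := by omega
    rw [hN, ← add_pow]
    norm_num
  calc probOn p R E ≤ _ := step1
    _ = _ := step2
    _ ≤ ∑ k ∈ Finset.range (n+1), (n.choose m : ℝ) * p ^ m *
          (if m ≤ k then ((n-m).choose (k-m) : ℝ) * p ^ (k-m) * (1-p) ^ ((n-m)-(k-m)) else 0) :=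
        Finset.sum_le_sum key
    _ = (n.choose m : ℝ) * p ^ m * ∑ k ∈ Finset.range (n+1),
          (if m ≤ k then ((n-m).choose (k-m) : ℝ) * p ^ (k-m) * (1-p) ^ ((n-m)-(k-m)) else 0) := by
        rw [Finset.mul_sum]
    _ = (n.choose m : ℝ) * p ^ m := by rw [step3, mul_one]



set_option maxHeartbeats 1000000 in
/-- There exists `δ > 0` such that for every `p ∈ (0,1)` and every rectangle with
dimensions `(a,b)`, `a ≤ b`, `ap ≤ δ`, the probability that the rectangle is
internally spanned is at most `3^{a+b} exp(-(a+b) g(aq))`, where `q = -log(1-p)`. -/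
theorem stmt8 :
    ∃ δ : ℝ, 0 < δ ∧ ∀ p : ℝ, 0 < p → p < 1 → ∀ a b : ℕ, 0 < a → a ≤ b →
      (a : ℝ) * p ≤ δ → ∀ x0 y0 : ℤ,
      probOn p (rectF x0 y0 (x0 + a - 1) (y0 + b - 1))
        (fun A => rectZ x0 y0 (x0 + a - 1) (y0 + b - 1) ⊆ bootClosure ↑A)
      ≤ (3 : ℝ) ^ (a + b) *
          Real.exp (-((a : ℝ) + (b : ℝ)) * gfun ((a : ℝ) * (-Real.log (1 - p)))) := by
  refine ⟨1/100, by norm_num, ?_⟩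
  intro p hp0 hp1 a b ha hab hδ x0 y0
  have hb : 0 < b := lt_of_lt_of_le ha hab
  set t : ℝ := (a:ℝ) * p with ht
  have ha1 : (1:ℝ) ≤ (a:ℝ) := by exact_mod_cast ha
  have ht0 : 0 < t := mul_pos (by linarith) hp0
  have ht1 : t ≤ 1/100 := hδ
  set m : ℕ := (a + b + 1) / 2 with hm
  have hcard : (rectF x0 y0 (x0 + a - 1) (y0 + b - 1)).card = a * b := by
    rw [rectF, Finset.card_product, Int.card_Icc, Int.card_Icc]
    have h1 : (x0 + a - 1 + 1 - x0) = (a:ℤ) := by ring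
    have h2 : (y0 + b - 1 + 1 - y0) = (b:ℤ) := by ring
    rw [h1, h2, Int.toNat_natCast, Int.toNat_natCast]
  have hmn : m ≤ a * b := by
    have hmb : m ≤ b := by omega
    exact le_trans hmb (Nat.le_mul_of_pos_left b ha)
  have h1 : probOn p (rectF x0 y0 (x0 + a - 1) (y0 + b - 1))
      (fun A => rectZ x0 y0 (x0 + a - 1) (y0 + b - 1) ⊆ bootClosure ↑A)
      ≤ ((a*b).choose m : ℝ) * p ^ m := by
    have := prob_le_choose hp0.le hp1.le (rectF x0 y0 (x0 + a - 1) (y0 + b - 1))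
      (fun A => rectZ x0 y0 (x0 + a - 1) (y0 + b - 1) ⊆ bootClosure ↑A) m
      (by rw [hcard]; exact hmn) ?_
    · rwa [hcard] at this
    · intro A hA hsp
      have := span_card_nat x0 y0 a b ha hb (Finset.mem_powerset.1 hA) hsp
      omega
  have hm1 : 1 ≤ m := by omega
  have hfact : ((m:ℝ))^m ≤ Real.exp 1 ^ m * (m.factorial : ℝ) := by
    have hsum := Real.sum_le_exp_of_nonneg (x := (m:ℝ)) (by positivity) (m+1)
    have hterm : ((m:ℝ))^m / (m.factorial : ℝ) ≤ Real.exp m := by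
      refine le_trans ?_ hsum
      exact Finset.single_le_sum (f := fun i => (m:ℝ)^i / (i.factorial : ℝ))
        (fun i _ => by positivity) (Finset.self_mem_range_succ m)
    rw [div_le_iff₀ (by positivity : (0:ℝ) < (m.factorial : ℝ))] at hterm
    calc ((m:ℝ))^m ≤ Real.exp m * (m.factorial : ℝ) := hterm
      _ = Real.exp 1 ^ m * (m.factorial : ℝ) := by rw [← Real.exp_one_pow]
  have h2 : ((a*b).choose m : ℝ) * p ^ m ≤ (2 * Real.exp 1 * t) ^ m := by
    have hcb : ((a*b).choose m : ℝ) ≤ ((a*b : ℕ) : ℝ)^m / (m.factorial : ℝ) :=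
      Nat.choose_le_pow_div m (a*b)
    have habp : ((a*b : ℕ) : ℝ) * p ≤ 2 * m * t := by
      have hbm : (b:ℝ) ≤ 2 * m := by
        have : b ≤ 2 * m := by omega
        exact_mod_cast this
      push_cast
      calc (a:ℝ) * b * p = (b:ℝ) * t := by ring
        _ ≤ (2*m) * t := by
            apply mul_le_mul_of_nonneg_right hbm ht0.le
        _ = 2 * m * t := by ring
    calc ((a*b).choose m : ℝ) * p ^ m ≤ (((a*b : ℕ) : ℝ)^m / (m.factorial : ℝ)) * p ^ m := by
          apply mul_le_mul_of_nonneg_right hcb (by positivity)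
      _ = (((a*b : ℕ) : ℝ) * p)^m / (m.factorial : ℝ) := by rw [mul_pow]; ring
      _ ≤ (2 * m * t)^m / (m.factorial : ℝ) := by
          gcongr
      _ = (2*t)^m * ((m:ℝ)^m / (m.factorial : ℝ)) := by
          rw [show (2*(m:ℝ)*t) = (2*t)*(m:ℝ) by ring, mul_pow]; ring
      _ ≤ (2*t)^m * Real.exp 1 ^ m := by
          apply mul_le_mul_of_nonneg_left ?_ (by positivity)
          rw [div_le_iff₀ (by positivity : (0:ℝ) < (m.factorial : ℝ))]
          exact hfact
      _ = (2 * Real.exp 1 * t) ^ m := by rw [← mul_pow]; congr 1; ring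
  -- the analytic quantities
  set Z : ℝ := (a:ℝ) * (-Real.log (1 - p)) with hZ
  set u : ℝ := 1 - (1-p)^a with hu
  have h1p : (0:ℝ) < 1 - p := by linarith
  have hexpZ : Real.exp (-Z) = (1-p)^a := by
    have hzz : -Z = (a:ℝ) * Real.log (1-p) := by rw [hZ]; ring
    rw [hzz, Real.exp_nat_mul, Real.exp_log h1p]
  have hu_eq : 1 - Real.exp (-Z) = u := by rw [hexpZ]
  have hpa_ge : 1 - t ≤ (1-p)^a := by
    have hber := one_add_mul_le_pow (a := -p) (by linarith) a
    have h' : ((1:ℝ) + -p)^a = (1-p)^a := by rw [show (1:ℝ) + -p = 1 - p by ring]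
    rw [h'] at hber
    have h'' : (1:ℝ) + (a:ℝ) * (-p) = 1 - t := by rw [ht]; ring
    linarith [h'' ▸ hber]
  have hu_le : u ≤ t := by rw [hu]; linarith
  have hu_pos : 0 < u := by
    rw [hu]
    have : (1-p)^a < 1^a := by
      apply pow_lt_pow_left₀ (by linarith) (by linarith) (by omega)
    simp only [one_pow] at this
    linarith
  have hpa_le : (1-p)^a ≤ 1/(1+t) := by
    have hA : 1 + t ≤ (1+p)^a := by
      have hber := one_add_mul_le_pow (a := p) (by linarith) a
      have h'' : (1:ℝ) + (a:ℝ) * p = 1 + t := by rw [ht]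
      linarith [h'' ▸ hber]
    have hprod : (1-p)^a * (1+p)^a ≤ 1 := by
      rw [← mul_pow]
      have hq : (1-p)*(1+p) = 1 - p^2 := by ring
      rw [hq]
      exact pow_le_one₀ (by nlinarith) (by nlinarith)
    rw [le_div_iff₀ (by linarith : (0:ℝ) < 1+t)]
    calc (1-p)^a * (1+t) ≤ (1-p)^a * (1+p)^a :=
          mul_le_mul_of_nonneg_left hA (pow_nonneg (by linarith) a)
      _ ≤ 1 := hprod
  have hu_ge : (100/101) * t ≤ u := by
    rw [hu]
    have ht01 : (0:ℝ) < 1 + t := by linarith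
    have hfr : 1 - 1/(1+t) = t/(1+t) := by field_simp; ring
    have h3 : (100/101)*t ≤ 1 - 1/(1+t) := by
      rw [hfr, le_div_iff₀ ht01]
      nlinarith
    linarith
  have hu_small : u ≤ 1/100 := le_trans hu_le ht1
  have hbeta_pos : 0 < beta u := by
    unfold beta
    have := Real.sqrt_nonneg (u * (4 - 3*u))
    positivity
  have hgfun : Real.exp (-(gfun Z)) = beta u := by
    rw [gfun, hu_eq, neg_neg, Real.exp_log hbeta_pos]
  set X : ℝ := 3 * beta u with hX
  have hsq : Real.sqrt t ^ 2 = t := Real.sq_sqrt ht0.le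
  have h40 : (0:ℝ) ≤ u * (4 - 3*u) := mul_nonneg hu_pos.le (by linarith)
  have hX_lb : 2.9 * Real.sqrt t ≤ X := by
    have hs2 : (2.9 * Real.sqrt t)^2 ≤ (1.5 * Real.sqrt (u*(4-3*u)))^2 := by
      rw [mul_pow, mul_pow, hsq, Real.sq_sqrt h40]
      nlinarith [hu_ge, hu_small, ht0, hu_pos, mul_le_mul_of_nonneg_left hu_small hu_pos.le]
    have h1' : 2.9 * Real.sqrt t ≤ 1.5 * Real.sqrt (u*(4-3*u)) := by
      have := Real.sqrt_le_sqrt hs2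
      rwa [Real.sqrt_sq (by positivity), Real.sqrt_sq (by positivity)] at this
    rw [hX]
    unfold beta
    linarith
  have hX_ub : X ≤ 1 := by
    have h1' : u*(4-3*u) ≤ (2/3 - u)^2 := by nlinarith [hu_pos, hu_small]
    have hs : Real.sqrt (u*(4-3*u)) ≤ 2/3 - u :=
      calc Real.sqrt (u*(4-3*u)) ≤ Real.sqrt ((2/3-u)^2) := Real.sqrt_le_sqrt h1'
        _ = 2/3 - u := Real.sqrt_sq (by linarith)
    rw [hX]
    unfold beta
    linarith
  have hX0 : 0 ≤ X := by rw [hX]; linarith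
  have hfin1 : (2*Real.exp 1 * t)^m ≤ X ^ (2*m) := by
    have he : Real.exp 1 < 2.7182818286 := Real.exp_one_lt_d9
    calc (2*Real.exp 1*t)^m ≤ (8.41*t)^m := by
          apply pow_le_pow_left₀ (by positivity) ?_ m
          nlinarith
      _ = ((2.9*Real.sqrt t)^2)^m := by congr 1; rw [mul_pow, hsq]; norm_num
      _ = (2.9*Real.sqrt t)^(2*m) := by rw [← pow_mul]
      _ ≤ X^(2*m) := pow_le_pow_left₀ (by positivity) hX_lb _
  have hfin2 : X^(2*m) ≤ X^(a+b) := pow_le_pow_of_le_one hX0 hX_ub (by omega)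
  have hRHS : (3:ℝ)^(a+b) * Real.exp (-((a:ℝ)+(b:ℝ)) * gfun Z) = X^(a+b) := by
    rw [hX, mul_pow, ← hgfun, ← Real.exp_nat_mul]
    congr 1
    push_cast
    ring
  rw [hRHS]
  exact le_trans h1 (le_trans h2 (le_trans hfin1 hfin2))
end

section
/- Let m ≥ (a+b)/2 be an integer and suppose 6aq < 1/2 with p ∈ (0,1), q = -log(1-p), a ≤ b positive integers. Then the sum over m ≥ (a+b)/2 of binom(ab, m)·p^m is at most (6aq)^{(a+b)/2}, provided ap is sufficiently small. -/
/-- For positive integers `a ≤ b`, `p ∈ (0,1)` with `ap` sufficiently small,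
`q = -log(1-p)` and `6aq < 1/2`, the union-bound sum
`∑_{m ≥ (a+b)/2} C(ab,m) p^m` is at most `(6aq)^{(a+b)/2}`. -/
theorem stmt9 :
    ∃ δ : ℝ, 0 < δ ∧ ∀ a b : ℕ, 0 < a → a ≤ b → ∀ p : ℝ, 0 < p → p < 1 →
      (a : ℝ) * p ≤ δ → 6 * (a : ℝ) * (-Real.log (1 - p)) < 1 / 2 →
      ∑ m ∈ (Finset.range (a * b + 1)).filter (fun m => a + b ≤ 2 * m),
          ((a * b).choose m : ℝ) * p ^ m
        ≤ (6 * (a : ℝ) * (-Real.log (1 - p))) ^ (((a : ℝ) + (b : ℝ)) / 2) := by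
  refine ⟨1/100, by norm_num, ?_⟩
  intro a b ha hab p hp hp1 hδ h6
  set q := -Real.log (1 - p) with hqdef
  have hb : 0 < b := lt_of_lt_of_le ha hab
  have hp' : 0 < 1 - p := by linarith
  have hq0 : 0 < q := by
    have : Real.log (1 - p) < 0 := Real.log_neg hp' (by linarith)
    simp only [hqdef]; linarith
  have hpq : p ≤ q := by
    have := Real.log_le_sub_one_of_pos hp'
    simp only [hqdef]; linarith
  have ha1 : (1:ℝ) ≤ (a:ℝ) := by exact_mod_cast ha
  have hap0 : 0 < (a:ℝ) * p := by positivity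
  have he : Real.exp 1 < 2.7182818286 := Real.exp_one_lt_d9
  have he0 : (0:ℝ) < Real.exp 1 := Real.exp_pos 1
  set y := 2 * Real.exp 1 * ((a:ℝ) * p) with hydef
  have hy0 : 0 < y := by positivity
  have hylt : y ≤ 0.06 := by nlinarith
  have h1y : 0 < 1 - y := by linarith
  set m0 := (a + b + 1) / 2 with hm0def
  have hm0le : a + b ≤ 2 * m0 := by omega
  have hm01 : 1 ≤ m0 := by omega
  -- termwise bound
  have hterm : ∀ m ∈ (Finset.range (a * b + 1)).filter (fun m => a + b ≤ 2 * m),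
      ((a * b).choose m : ℝ) * p ^ m ≤ y ^ m := by
    intro m hm
    simp only [Finset.mem_filter, Finset.mem_range] at hm
    obtain ⟨hmN, hmab⟩ := hm
    have habm : a * b ≤ 2 * a * m := by
      calc a * b ≤ a * (2 * m) := Nat.mul_le_mul_left a (by omega)
        _ = 2 * a * m := by ring
    have habmR : ((a * b : ℕ) : ℝ) ≤ 2 * (a:ℝ) * m := by
      have : ((a * b : ℕ) : ℝ) ≤ ((2 * a * m : ℕ) : ℝ) := by exact_mod_cast habm
      push_cast at this ⊢
      linarith
    have hfac : (0:ℝ) < (m.factorial : ℝ) := by exact_mod_cast m.factorial_pos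
    have hmm : ((m:ℝ)) ^ m / (m.factorial : ℝ) ≤ Real.exp 1 ^ m := by
      calc ((m:ℝ)) ^ m / (m.factorial : ℝ) ≤ Real.exp (m:ℝ) :=
            Real.pow_div_factorial_le_exp (x := (m:ℝ)) (by positivity) m
        _ = Real.exp 1 ^ m := by rw [← Real.exp_nat_mul, mul_one]
    calc ((a * b).choose m : ℝ) * p ^ m
        ≤ (((a*b:ℕ):ℝ) ^ m / (m.factorial : ℝ)) * p ^ m :=
          mul_le_mul_of_nonneg_right (Nat.choose_le_pow_div m (a*b)) (by positivity)
      _ = (((a*b:ℕ):ℝ) * p) ^ m / (m.factorial : ℝ) := by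
          rw [mul_pow]; ring
      _ ≤ ((2 * (a:ℝ) * m) * p) ^ m / (m.factorial : ℝ) := by
          gcongr
      _ = (2 * (a:ℝ) * p) ^ m * ((m:ℝ) ^ m / (m.factorial : ℝ)) := by
          rw [← mul_div_assoc, ← mul_pow]
          have : 2 * (a:ℝ) * ↑m * p = 2 * (a:ℝ) * p * ↑m := by ring
          rw [this]
      _ ≤ (2 * (a:ℝ) * p) ^ m * Real.exp 1 ^ m := by
          gcongr
      _ = y ^ m := by
          rw [← mul_pow]
          congr 1
          rw [hydef]; ring
  -- sum ≤ geometric tail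
  have hsum1 : ∑ m ∈ (Finset.range (a * b + 1)).filter (fun m => a + b ≤ 2 * m),
      ((a * b).choose m : ℝ) * p ^ m ≤ ∑ m ∈ Finset.Ico m0 (a * b + 1), y ^ m := by
    have hsub : (Finset.range (a * b + 1)).filter (fun m => a + b ≤ 2 * m)
        ⊆ Finset.Ico m0 (a * b + 1) := by
      intro m hm
      simp only [Finset.mem_filter, Finset.mem_range] at hm
      simp only [Finset.mem_Ico]
      omega
    calc ∑ m ∈ (Finset.range (a * b + 1)).filter (fun m => a + b ≤ 2 * m),
          ((a * b).choose m : ℝ) * p ^ m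
        ≤ ∑ m ∈ (Finset.range (a * b + 1)).filter (fun m => a + b ≤ 2 * m), y ^ m :=
          Finset.sum_le_sum hterm
      _ ≤ ∑ m ∈ Finset.Ico m0 (a * b + 1), y ^ m :=
          Finset.sum_le_sum_of_subset_of_nonneg hsub (fun i _ _ => by positivity)
  have hgeom : ∑ m ∈ Finset.Ico m0 (a * b + 1), y ^ m ≤ y ^ m0 * (1 - y)⁻¹ := by
    rcases le_or_gt (a * b + 1) m0 with h | h
    · rw [Finset.Ico_eq_empty (by omega)]
      simp only [Finset.sum_empty]
      positivity
    · rw [Finset.sum_Ico_eq_sum_range]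
      have hrw : ∀ i ∈ Finset.range (a * b + 1 - m0), y ^ (m0 + i) = y ^ m0 * y ^ i :=
        fun i _ => pow_add y m0 i
      rw [Finset.sum_congr rfl hrw, ← Finset.mul_sum]
      have hgs : (∑ i ∈ Finset.range (a * b + 1 - m0), y ^ i) * (y - 1)
          = y ^ (a * b + 1 - m0) - 1 := geom_sum_mul y _
      have hyn : (0:ℝ) ≤ y ^ (a * b + 1 - m0) := by positivity
      have hgle : ∑ i ∈ Finset.range (a * b + 1 - m0), y ^ i ≤ (1 - y)⁻¹ := by
        rw [inv_eq_one_div, le_div_iff₀ h1y]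
        nlinarith
      have hym0 : (0:ℝ) ≤ y ^ m0 := by positivity
      exact mul_le_mul_of_nonneg_left hgle hym0
  -- geometric tail ≤ (6ap)^m0
  have hkey : y ^ m0 * (1 - y)⁻¹ ≤ (6 * (a:ℝ) * p) ^ m0 := by
    have hfac : (Real.exp 1 / 3) ^ m0 ≤ 1 - y := by
      have h1 : (Real.exp 1 / 3) ^ m0 ≤ Real.exp 1 / 3 :=
        pow_le_of_le_one (by positivity) (by nlinarith) (by omega)
      nlinarith
    have hyeq : y ^ m0 = (6 * (a:ℝ) * p) ^ m0 * (Real.exp 1 / 3) ^ m0 := by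
      rw [← mul_pow]
      congr 1
      rw [hydef]; ring
    have h2 : (Real.exp 1 / 3) ^ m0 * (1 - y)⁻¹ ≤ 1 := by
      rw [← div_eq_mul_inv, div_le_one h1y]
      exact hfac
    calc y ^ m0 * (1 - y)⁻¹
        = (6 * (a:ℝ) * p) ^ m0 * ((Real.exp 1 / 3) ^ m0 * (1 - y)⁻¹) := by
          rw [hyeq, mul_assoc]
      _ ≤ (6 * (a:ℝ) * p) ^ m0 * 1 :=
          mul_le_mul_of_nonneg_left h2 (by positivity)
      _ = (6 * (a:ℝ) * p) ^ m0 := mul_one _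
  -- (6ap)^m0 ≤ (6aq)^m0 ≤ (6aq)^((a+b)/2)
  have hmono : (6 * (a:ℝ) * p) ^ m0 ≤ (6 * (a:ℝ) * q) ^ m0 :=
    pow_le_pow_left₀ (by positivity) (by nlinarith) m0
  have hx0 : 0 < 6 * (a:ℝ) * q := by positivity
  have hx1 : 6 * (a:ℝ) * q ≤ 1 := le_of_lt (lt_trans h6 (by norm_num))
  have hrpow : (6 * (a:ℝ) * q) ^ m0 ≤ (6 * (a:ℝ) * q) ^ (((a:ℝ) + (b:ℝ)) / 2) := by
    rw [← Real.rpow_natCast (6 * (a:ℝ) * q) m0]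
    apply Real.rpow_le_rpow_of_exponent_ge hx0 hx1
    have : ((a:ℝ) + b) ≤ 2 * (m0:ℕ) := by exact_mod_cast hm0le
    push_cast at this ⊢
    linarith
  calc ∑ m ∈ (Finset.range (a * b + 1)).filter (fun m => a + b ≤ 2 * m),
        ((a * b).choose m : ℝ) * p ^ m
      ≤ ∑ m ∈ Finset.Ico m0 (a * b + 1), y ^ m := hsum1
    _ ≤ y ^ m0 * (1 - y)⁻¹ := hgeom
    _ ≤ (6 * (a:ℝ) * p) ^ m0 := hkey
    _ ≤ (6 * (a:ℝ) * q) ^ m0 := hmono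
    _ ≤ (6 * (a:ℝ) * q) ^ (((a:ℝ) + (b:ℝ)) / 2) := hrpow
end

section
/- In a good hierarchy H for (T,Z) with 4T ≤ 1 and Z ≥ 6, every vertex is either a seed (leaf) or lies above at least one large seed, where a large seed is a seed u with φ(R_u) ≥ Z/3. -/
/-- An axis-parallel rectangle in `ℤ²`. -/
structure Rect where
  x0 : ℤ
  y0 : ℤ
  x1 : ℤ
  y1 : ℤ
  hx : x0 ≤ x1
  hy : y0 ≤ y1

def Rect.width (R : Rect) : ℤ := R.x1 - R.x0 + 1
def Rect.height (R : Rect) : ℤ := R.y1 - R.y0 + 1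
/-- The semi-perimeter. -/
def Rect.phi (R : Rect) : ℤ := R.width + R.height
/-- The shorter side length. -/
def Rect.short (R : Rect) : ℤ := min R.width R.height
def Rect.toSet (R : Rect) : Set (ℤ × ℤ) :=
  {v | R.x0 ≤ v.1 ∧ v.1 ≤ R.x1 ∧ R.y0 ≤ v.2 ∧ v.2 ≤ R.y1}
/-- Containment of rectangles. -/
def Rect.sub (S R : Rect) : Prop := R.x0 ≤ S.x0 ∧ S.x1 ≤ R.x1 ∧ R.y0 ≤ S.y0 ∧ S.y1 ≤ R.y1

/-- `d(S,R) = max_j (dim_j R - dim_j S)/dim_j R`. -/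
noncomputable def rdist (S R : Rect) : ℝ :=
  max (((R.width - S.width : ℤ) : ℝ) / ((R.width : ℤ) : ℝ))
      (((R.height - S.height : ℤ) : ℝ) / ((R.height : ℤ) : ℝ))

/-- A hierarchy: a finite rooted tree, each vertex labelled by a rectangle,
with at most two children per vertex. -/
inductive Hier where
  | seed : Rect → Hier
  | one : Rect → Hier → Hier
  | two : Rect → Hier → Hier → Hier

def Hier.rect : Hier → Rect
  | seed R => R
  | one R _ => R
  | two R _ _ => R

/-- The height of a hierarchy: the maximum distance from the root to a leaf. -/
def Hier.height : Hier → ℕ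
  | seed _ => 0
  | one _ c => c.height + 1
  | two _ c d => max c.height d.height + 1

/-- A hierarchy is good for `(T,Z)`: seeds are exactly the vertices whose
rectangle has short side `≤ Z`; a single child `v` of `u` satisfies
`d(R_v,R_u) ≤ 2T`, and moreover `T ≤ d(R_v,R_u)` when `v` itself has exactly one
child; the two children `v,w` of a doubly-branching vertex `u` satisfy
`d ≥ T` and `[R_v ∪ R_w] = R_u`. -/
def good (T Z : ℝ) : Hier → Prop
  | .seed R => ((R.short : ℤ) : ℝ) ≤ Z
  | .one R c => Z < ((R.short : ℤ) : ℝ) ∧ c.rect.sub R ∧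
      (match c with
        | .one _ _ => T ≤ rdist c.rect R ∧ rdist c.rect R ≤ 2 * T
        | _ => rdist c.rect R ≤ 2 * T) ∧
      good T Z c
  | .two R c d => Z < ((R.short : ℤ) : ℝ) ∧ c.rect.sub R ∧ d.rect.sub R ∧
      T ≤ rdist c.rect R ∧ T ≤ rdist d.rect R ∧
      bootClosure (c.rect.toSet ∪ d.rect.toSet) = R.toSet ∧
      good T Z c ∧ good T Z d


/-- `Hier.Sub H' H` : `H'` is a subtree (vertex) of `H`. -/
inductive Hier.Sub : Hier → Hier → Prop
  | refl (H : Hier) : Hier.Sub H H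
  | one (R : Rect) (c H : Hier) : Hier.Sub H c → Hier.Sub H (.one R c)
  | left (R : Rect) (c d H : Hier) : Hier.Sub H c → Hier.Sub H (.two R c d)
  | right (R : Rect) (c d H : Hier) : Hier.Sub H d → Hier.Sub H (.two R c d)

/-- Whether the root of a hierarchy is a seed (leaf). -/
def Hier.isSeed : Hier → Prop
  | seed _ => True
  | _ => False

/-- The subtree contains a large seed, i.e. a seed `u` with `φ(R_u) ≥ Z/3`. -/
def anyLargeSeed (Z : ℝ) : Hier → Prop
  | .seed R => Z / 3 ≤ ((R.phi : ℤ) : ℝ)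
  | .one _ c => anyLargeSeed Z c
  | .two _ c d => anyLargeSeed Z c ∨ anyLargeSeed Z d


section Aux

def closed2 (B : Set (ℤ × ℤ)) : Prop :=
  ∀ v : ℤ × ℤ, 2 ≤ ({w | nbr v w} ∩ B).ncard → v ∈ B

lemma bootClosure_subset {A B : Set (ℤ × ℤ)} (hAB : A ⊆ B) (hB : closed2 B) :
    bootClosure A ⊆ B :=
  Set.sInter_subset_of_mem ⟨hAB, hB⟩

lemma nbr_cases (v w : ℤ × ℤ) (h : nbr v w) :
    (w.1 = v.1 + 1 ∧ w.2 = v.2) ∨ (w.1 = v.1 - 1 ∧ w.2 = v.2) ∨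
    (w.1 = v.1 ∧ w.2 = v.2 + 1) ∨ (w.1 = v.1 ∧ w.2 = v.2 - 1) := by
  unfold nbr at h
  rcases abs_cases (w.1 - v.1) with ⟨h1, h1'⟩ | ⟨h1, h1'⟩ <;>
    rcases abs_cases (w.2 - v.2) with ⟨h2, h2'⟩ | ⟨h2, h2'⟩ <;> omega

lemma closed2_of (B : Set (ℤ × ℤ))
    (h : ∀ v ∉ B, ∃ p : ℤ × ℤ, ∀ w, nbr v w → w ∈ B → w = p) : closed2 B := by
  intro v hv
  by_contra hvB
  obtain ⟨p, hp⟩ := h v hvB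
  have hsub : {w | nbr v w} ∩ B ⊆ {p} := fun w hw => hp w hw.1 hw.2
  have := Set.ncard_le_ncard hsub (Set.finite_singleton p)
  simp at this
  omega

lemma closed2_box (m M m' M' : ℤ) :
    closed2 {v : ℤ × ℤ | m ≤ v.1 ∧ v.1 ≤ M ∧ m' ≤ v.2 ∧ v.2 ≤ M'} := by
  apply closed2_of
  intro v hv
  simp only [Set.mem_setOf_eq] at hv
  push_neg at hv
  rcases lt_or_ge v.1 m with h | h1
  · exact ⟨(v.1 + 1, v.2), fun w hn hw => by
      simp only [Set.mem_setOf_eq] at hw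
      rcases nbr_cases v w hn with ⟨a, b⟩ | ⟨a, b⟩ | ⟨a, b⟩ | ⟨a, b⟩ <;>
        (rw [Prod.ext_iff]; refine ⟨?_, ?_⟩ <;> simp <;> omega)⟩
  rcases lt_or_ge M v.1 with h | h2
  · exact ⟨(v.1 - 1, v.2), fun w hn hw => by
      simp only [Set.mem_setOf_eq] at hw
      rcases nbr_cases v w hn with ⟨a, b⟩ | ⟨a, b⟩ | ⟨a, b⟩ | ⟨a, b⟩ <;>
        (rw [Prod.ext_iff]; refine ⟨?_, ?_⟩ <;> simp <;> omega)⟩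
  rcases lt_or_ge v.2 m' with h | h3
  · exact ⟨(v.1, v.2 + 1), fun w hn hw => by
      simp only [Set.mem_setOf_eq] at hw
      rcases nbr_cases v w hn with ⟨a, b⟩ | ⟨a, b⟩ | ⟨a, b⟩ | ⟨a, b⟩ <;>
        (rw [Prod.ext_iff]; refine ⟨?_, ?_⟩ <;> simp <;> omega)⟩
  rcases lt_or_ge M' v.2 with h | h4
  · exact ⟨(v.1, v.2 - 1), fun w hn hw => by
      simp only [Set.mem_setOf_eq] at hw
      rcases nbr_cases v w hn with ⟨a, b⟩ | ⟨a, b⟩ | ⟨a, b⟩ | ⟨a, b⟩ <;>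
        (rw [Prod.ext_iff]; refine ⟨?_, ?_⟩ <;> simp <;> omega)⟩
  omega

lemma closed2_stripx (a : ℤ) :
    closed2 {v : ℤ × ℤ | v.1 ≤ a ∨ a + 3 ≤ v.1} := by
  apply closed2_of
  intro v hv
  simp only [Set.mem_setOf_eq] at hv
  push_neg at hv
  rcases le_or_gt v.1 (a + 1) with h | h
  · exact ⟨(v.1 - 1, v.2), fun w hn hw => by
      simp only [Set.mem_setOf_eq] at hw
      rcases nbr_cases v w hn with ⟨c, b⟩ | ⟨c, b⟩ | ⟨c, b⟩ | ⟨c, b⟩ <;>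
        (rw [Prod.ext_iff]; refine ⟨?_, ?_⟩ <;> simp <;> omega)⟩
  · exact ⟨(v.1 + 1, v.2), fun w hn hw => by
      simp only [Set.mem_setOf_eq] at hw
      rcases nbr_cases v w hn with ⟨c, b⟩ | ⟨c, b⟩ | ⟨c, b⟩ | ⟨c, b⟩ <;>
        (rw [Prod.ext_iff]; refine ⟨?_, ?_⟩ <;> simp <;> omega)⟩

lemma closed2_stripy (a : ℤ) :
    closed2 {v : ℤ × ℤ | v.2 ≤ a ∨ a + 3 ≤ v.2} := by
  apply closed2_of
  intro v hv
  simp only [Set.mem_setOf_eq] at hv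
  push_neg at hv
  rcases le_or_gt v.2 (a + 1) with h | h
  · exact ⟨(v.1, v.2 - 1), fun w hn hw => by
      simp only [Set.mem_setOf_eq] at hw
      rcases nbr_cases v w hn with ⟨c, b⟩ | ⟨c, b⟩ | ⟨c, b⟩ | ⟨c, b⟩ <;>
        (rw [Prod.ext_iff]; refine ⟨?_, ?_⟩ <;> simp <;> omega)⟩
  · exact ⟨(v.1, v.2 + 1), fun w hn hw => by
      simp only [Set.mem_setOf_eq] at hw
      rcases nbr_cases v w hn with ⟨c, b⟩ | ⟨c, b⟩ | ⟨c, b⟩ | ⟨c, b⟩ <;>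
        (rw [Prod.ext_iff]; refine ⟨?_, ?_⟩ <;> simp <;> omega)⟩

lemma gap_bound (Sc Sd R : Rect) (hc : Sc.sub R) (hd : Sd.sub R)
    (hb : bootClosure (Sc.toSet ∪ Sd.toSet) = R.toSet) :
    R.phi ≤ Sc.phi + Sd.phi + 2 := by
  obtain ⟨hc1, hc2, hc3, hc4⟩ := hc
  obtain ⟨hd1, hd2, hd3, hd4⟩ := hd
  have e1 := Sc.hx; have e2 := Sc.hy; have e3 := Sd.hx
  have e4 := Sd.hy; have e5 := R.hx; have e6 := R.hy
  have hbox : R.toSet ⊆ {v : ℤ × ℤ | min Sc.x0 Sd.x0 ≤ v.1 ∧ v.1 ≤ max Sc.x1 Sd.x1 ∧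
      min Sc.y0 Sd.y0 ≤ v.2 ∧ v.2 ≤ max Sc.y1 Sd.y1} := by
    rw [← hb]
    apply bootClosure_subset _ (closed2_box _ _ _ _)
    rintro v (hv | hv) <;> simp only [Rect.toSet, Set.mem_setOf_eq] at hv ⊢ <;> omega
  have h00 : (R.x0, R.y0) ∈ R.toSet := by
    simp only [Rect.toSet, Set.mem_setOf_eq]
    exact ⟨le_refl _, R.hx, le_refl _, R.hy⟩
  have h11 : (R.x1, R.y1) ∈ R.toSet := by
    simp only [Rect.toSet, Set.mem_setOf_eq]
    exact ⟨R.hx, le_refl _, R.hy, le_refl _⟩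
  have hb00 := hbox h00
  have hb11 := hbox h11
  simp only [Set.mem_setOf_eq] at hb00 hb11
  have hgapx : ∀ a : ℤ, R.x0 ≤ a + 1 → a + 1 ≤ R.x1 →
      (Sc.toSet ∪ Sd.toSet) ⊆ {v : ℤ × ℤ | v.1 ≤ a ∨ a + 3 ≤ v.1} → False := by
    intro a ha1 ha2 hss
    have := bootClosure_subset hss (closed2_stripx a)
    rw [hb] at this
    have hm : (a + 1, R.y0) ∈ R.toSet := by
      simp only [Rect.toSet, Set.mem_setOf_eq]
      refine ⟨by omega, by omega, le_refl _, R.hy⟩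
    have := this hm
    simp only [Set.mem_setOf_eq] at this
    omega
  have hgapy : ∀ a : ℤ, R.y0 ≤ a + 1 → a + 1 ≤ R.y1 →
      (Sc.toSet ∪ Sd.toSet) ⊆ {v : ℤ × ℤ | v.2 ≤ a ∨ a + 3 ≤ v.2} → False := by
    intro a ha1 ha2 hss
    have := bootClosure_subset hss (closed2_stripy a)
    rw [hb] at this
    have hm : (R.x0, a + 1) ∈ R.toSet := by
      simp only [Rect.toSet, Set.mem_setOf_eq]
      refine ⟨le_refl _, R.hx, by omega, by omega⟩
    have := this hm
    simp only [Set.mem_setOf_eq] at this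
    omega
  have hwx : R.x1 - R.x0 ≤ (Sc.x1 - Sc.x0) + (Sd.x1 - Sd.x0) + 2 := by
    by_contra hcon
    have hdis : Sc.x1 + 3 ≤ Sd.x0 ∨ Sd.x1 + 3 ≤ Sc.x0 := by omega
    rcases hdis with hgap | hgap
    · exact hgapx Sc.x1 (by omega) (by omega) (by
        rintro v (hv | hv) <;> simp only [Rect.toSet, Set.mem_setOf_eq] at hv ⊢ <;> omega)
    · exact hgapx Sd.x1 (by omega) (by omega) (by
        rintro v (hv | hv) <;> simp only [Rect.toSet, Set.mem_setOf_eq] at hv ⊢ <;> omega)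
  have hwy : R.y1 - R.y0 ≤ (Sc.y1 - Sc.y0) + (Sd.y1 - Sd.y0) + 2 := by
    by_contra hcon
    have hdis : Sc.y1 + 3 ≤ Sd.y0 ∨ Sd.y1 + 3 ≤ Sc.y0 := by omega
    rcases hdis with hgap | hgap
    · exact hgapy Sc.y1 (by omega) (by omega) (by
        rintro v (hv | hv) <;> simp only [Rect.toSet, Set.mem_setOf_eq] at hv ⊢ <;> omega)
    · exact hgapy Sd.y1 (by omega) (by omega) (by
        rintro v (hv | hv) <;> simp only [Rect.toSet, Set.mem_setOf_eq] at hv ⊢ <;> omega)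
  simp only [Rect.phi, Rect.width, Rect.height]
  omega

lemma good_sub {T Z : ℝ} {H' H : Hier} (h : Hier.Sub H' H) (hg : good T Z H) :
    good T Z H' := by
  induction h with
  | refl H => exact hg
  | one R c H h ih => exact ih hg.2.2.2
  | left R c d H h ih => exact ih hg.2.2.2.2.2.2.1
  | right R c d H h ih => exact ih hg.2.2.2.2.2.2.2

lemma seed_large {T Z : ℝ} (hT0 : 0 < T) (h4T : 4 * T ≤ 1) (hZ6 : 6 ≤ Z)
    (S R : Rect) (hZR : Z < ((R.short : ℤ) : ℝ)) (hrd : rdist S R ≤ 2 * T) :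
    Z / 3 ≤ ((S.phi : ℤ) : ℝ) := by
  have h1 : ((R.short : ℤ) : ℝ) ≤ ((R.width : ℤ) : ℝ) :=
    Int.cast_le.mpr (min_le_left _ _)
  have h2 : ((R.short : ℤ) : ℝ) ≤ ((R.height : ℤ) : ℝ) :=
    Int.cast_le.mpr (min_le_right _ _)
  have hwpos : (0 : ℝ) < ((R.width : ℤ) : ℝ) := by linarith
  have hhpos : (0 : ℝ) < ((R.height : ℤ) : ℝ) := by linarith
  have hrd1 : (((R.width - S.width : ℤ) : ℝ)) / ((R.width : ℤ) : ℝ) ≤ 2 * T :=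
    le_trans (le_max_left _ _) hrd
  have hrd2 : (((R.height - S.height : ℤ) : ℝ)) / ((R.height : ℤ) : ℝ) ≤ 2 * T :=
    le_trans (le_max_right _ _) hrd
  rw [div_le_iff₀ hwpos] at hrd1
  rw [div_le_iff₀ hhpos] at hrd2
  push_cast at hrd1 hrd2 ⊢
  have hphi : ((S.phi : ℤ) : ℝ) = ((S.width : ℤ) : ℝ) + ((S.height : ℤ) : ℝ) := by
    simp [Rect.phi]
  rw [hphi]
  nlinarith [hwpos, hhpos, hrd1, hrd2]

lemma main_lemma {T Z : ℝ} (hT0 : 0 < T) (h4T : 4 * T ≤ 1) (hZ6 : 6 ≤ Z) :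
    ∀ H : Hier, good T Z H → H.isSeed ∨ anyLargeSeed Z H := by
  intro H
  induction H with
  | seed R => intro _; left; trivial
  | one R c ih =>
    intro hg
    obtain ⟨hZR, hsub, hrd, hgc⟩ := hg
    right
    show anyLargeSeed Z c
    rcases ih hgc with hs | hl
    · cases c with
      | seed S => exact seed_large hT0 h4T hZ6 S R hZR hrd
      | one S c' => exact hs.elim
      | two S c' d' => exact hs.elim
    · exact hl
  | two R c d ihc ihd =>
    intro hg
    obtain ⟨hZR, hsc, hsd, _hr1, _hr2, hboot, hgc, hgd⟩ := hg
    right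
    rcases ihc hgc with hs1 | hl1
    · rcases ihd hgd with hs2 | hl2
      · cases c with
        | one S c' => exact hs1.elim
        | two S c' d' => exact hs1.elim
        | seed Sc =>
          cases d with
          | one S c' => exact hs2.elim
          | two S c' d' => exact hs2.elim
          | seed Sd =>
            have hgap := gap_bound Sc Sd R hsc hsd hboot
            have h1 : ((R.short : ℤ) : ℝ) ≤ ((R.width : ℤ) : ℝ) :=
              Int.cast_le.mpr (min_le_left _ _)
            have h2 : ((R.short : ℤ) : ℝ) ≤ ((R.height : ℤ) : ℝ) :=
              Int.cast_le.mpr (min_le_right _ _)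
            have hphi : ((R.phi : ℤ) : ℝ) ≤ ((Sc.phi : ℤ) : ℝ) + ((Sd.phi : ℤ) : ℝ) + 2 := by
              exact_mod_cast hgap
            have hRphi : ((R.phi : ℤ) : ℝ) = ((R.width : ℤ) : ℝ) + ((R.height : ℤ) : ℝ) := by
              simp [Rect.phi]
            show Z / 3 ≤ ((Sc.phi : ℤ) : ℝ) ∨ Z / 3 ≤ ((Sd.phi : ℤ) : ℝ)
            by_contra hcon
            push_neg at hcon
            obtain ⟨ha, hb⟩ := hcon
            linarith
      · exact Or.inr hl2
    · exact Or.inl hl1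

end Aux


/-- In a good hierarchy for `(T,Z)` with `4T ≤ 1` and `Z ≥ 6`, every vertex is
either a seed or lies above at least one large seed. -/
theorem stmt12 (T Z : ℝ) (hT0 : 0 < T) (h4T : 4 * T ≤ 1) (hZ6 : 6 ≤ Z)
    (H : Hier) (hg : good T Z H) (H' : Hier) (hsub : Hier.Sub H' H) :
    H'.isSeed ∨ anyLargeSeed Z H' := by
  exact main_lemma hT0 h4T hZ6 H' (good_sub hsub hg)
end

section
/- Let R be a rectangle with dimensions (a,b). The probability, under independent site percolation with density p, that R is crossed from left to right (i.e., R has no two adjacent empty columns and its final column is occupied) is at most e^{-a·g(bq)}, where q = -log(1-p) and g(z) = -log(β(1-e^{-z})), β(u) = (u+sqrt(u(4-3u)))/2. -/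
open scoped Classical

/-- Column `i` of the rectangle (with vertical extent `[y0, y0+b-1]`) contains an
occupied site of `A`. -/
def colOcc (A : Finset (ℤ × ℤ)) (y0 : ℤ) (b : ℕ) (i : ℤ) : Prop :=
  ∃ y ∈ Finset.Icc y0 (y0 + (b : ℤ) - 1), (i, y) ∈ A

/-- The rectangle with columns `x0, …, x0+a-1` is crossed from left to right:
no two adjacent columns are both empty, and the final column is occupied. -/
def Crossed (x0 y0 : ℤ) (a b : ℕ) (A : Finset (ℤ × ℤ)) : Prop :=
  (∀ i : ℤ, x0 ≤ i → i + 1 ≤ x0 + (a : ℤ) - 1 →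
    (colOcc A y0 b i ∨ colOcc A y0 b (i + 1))) ∧
  colOcc A y0 b (x0 + (a : ℤ) - 1)

namespace Aux
set_option linter.unusedSectionVars false

variable {α : Type*} [DecidableEq α]

noncomputable def psum (p : ℝ) (R : Finset α) (F : Finset α → ℝ) : ℝ :=
  ∑ A ∈ R.powerset, p ^ A.card * (1 - p) ^ (R.card - A.card) * F A

lemma psum_congr {p : ℝ} {R : Finset α} {F G : Finset α → ℝ}
    (h : ∀ A ⊆ R, F A = G A) : psum p R F = psum p R G :=
  Finset.sum_congr rfl fun A hA => by rw [h A (Finset.mem_powerset.mp hA)]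

lemma psum_empty (p : ℝ) (F : Finset α → ℝ) : psum p ∅ F = F ∅ := by
  simp [psum]

lemma psum_insert {p : ℝ} {i : α} {R : Finset α} (hi : i ∉ R) (F : Finset α → ℝ) :
    psum p (insert i R) F
      = p * psum p R (fun A => F (insert i A)) + (1 - p) * psum p R F := by
  unfold psum
  rw [Finset.sum_powerset_insert hi, Finset.mul_sum, Finset.mul_sum, add_comm]
  congr 1
  · refine Finset.sum_congr rfl fun A hA => ?_
    have hAR : A ⊆ R := Finset.mem_powerset.mp hA
    have hiA : i ∉ A := fun h => hi (hAR h)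
    have hle : A.card ≤ R.card := Finset.card_le_card hAR
    rw [Finset.card_insert_of_notMem hi, Finset.card_insert_of_notMem hiA]
    have h2 : R.card + 1 - (A.card + 1) = R.card - A.card := by omega
    rw [h2, pow_succ]; ring
  · refine Finset.sum_congr rfl fun A hA => ?_
    have hAR : A ⊆ R := Finset.mem_powerset.mp hA
    have hle : A.card ≤ R.card := Finset.card_le_card hAR
    rw [Finset.card_insert_of_notMem hi]
    have h2 : R.card + 1 - A.card = (R.card - A.card) + 1 := by omega
    rw [h2, pow_succ]; ring

lemma psum_const (p c : ℝ) (R : Finset α) : psum p R (fun _ => c) = c := by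
  induction R using Finset.induction_on with
  | empty => simp [psum_empty]
  | insert _ _ hi ih => rw [psum_insert hi]; rw [ih]; ring

lemma psum_mul_const (p c : ℝ) (R : Finset α) (F : Finset α → ℝ) :
    psum p R (fun A => F A * c) = psum p R F * c := by
  unfold psum; rw [Finset.sum_mul]
  exact Finset.sum_congr rfl fun A _ => by ring

lemma psum_add (p : ℝ) (R : Finset α) (F G : Finset α → ℝ) :
    psum p R (fun A => F A + G A) = psum p R F + psum p R G := by
  unfold psum; rw [← Finset.sum_add_distrib]
  exact Finset.sum_congr rfl fun A _ => by ring

lemma psum_prod (p : ℝ) {s t : Finset α} (hd : Disjoint s t) (G H : Finset α → ℝ) :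
    psum p (s ∪ t) (fun A => G (A ∩ s) * H (A ∩ t))
      = psum p s (fun B => G (B ∩ s)) * psum p t (fun D => H (D ∩ t)) := by
  induction t using Finset.induction_on generalizing H with
  | empty =>
      simp only [Finset.union_empty, Finset.inter_empty, psum_empty]
      rw [psum_mul_const]
  | @insert i t' hi ih =>
      have his : i ∉ s := fun h => (Finset.disjoint_left.mp hd) h (Finset.mem_insert_self i t')
      have hd' : Disjoint s t' := hd.mono_right (Finset.subset_insert i t')
      have hiu : i ∉ s ∪ t' := by
        simp only [Finset.mem_union]; rintro (h | h)
        · exact his h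
        · exact hi h
      have hset : s ∪ insert i t' = insert i (s ∪ t') := by
        ext x; simp only [Finset.mem_insert, Finset.mem_union]; tauto
      rw [hset, psum_insert hiu]
      have e1 : psum p (s ∪ t') (fun A => G ((insert i A) ∩ s) * H ((insert i A) ∩ insert i t'))
          = psum p (s ∪ t') (fun A => G (A ∩ s) * (fun D => H (insert i D)) (A ∩ t')) := by
        apply psum_congr; intro A hA
        have hiA : i ∉ A := fun h => hiu (hA h)
        rw [Finset.insert_inter_of_notMem his,
          Finset.insert_inter_of_mem (Finset.mem_insert_self i t'),
          Finset.inter_insert_of_notMem hiA]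
      have e2 : psum p (s ∪ t') (fun A => G (A ∩ s) * H (A ∩ insert i t'))
          = psum p (s ∪ t') (fun A => G (A ∩ s) * H (A ∩ t')) := by
        apply psum_congr; intro A hA
        have hiA : i ∉ A := fun h => hiu (hA h)
        rw [Finset.inter_insert_of_notMem hiA]
      rw [e1, e2, ih hd' (fun D => H (insert i D)), ih hd' H, psum_insert hi]
      have e3 : psum p t' (fun D => H (insert i D ∩ insert i t'))
          = psum p t' (fun D => H (insert i (D ∩ t'))) := by
        apply psum_congr; intro D hD
        have hiD : i ∉ D := fun h => hi (hD h)
        rw [Finset.insert_inter_of_mem (Finset.mem_insert_self i t'),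
          Finset.inter_insert_of_notMem hiD]
      have e4 : psum p t' (fun D => H (D ∩ insert i t'))
          = psum p t' (fun D => H (D ∩ t')) := by
        apply psum_congr; intro D hD
        have hiD : i ∉ D := fun h => hi (hD h)
        rw [Finset.inter_insert_of_notMem hiD]
      rw [e3, e4]
      have e5 : psum p t' (fun D => H (insert i (D ∩ t')))
          = psum p t' (fun D => (fun B => H (insert i B)) (D ∩ t')) := rfl
      rw [e5]
      ring

/-- real-valued indicator -/
noncomputable def ind (P : Prop) : ℝ := if P then 1 else 0

lemma ind_congr {P Q : Prop} (h : P ↔ Q) : ind P = ind Q := by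
  unfold ind; by_cases hP : P <;> simp [hP, h.symm, hP]

@[simp] lemma ind_true : ind True = 1 := by simp [ind]

lemma ind_and (P Q : Prop) : ind (P ∧ Q) = ind P * ind Q := by
  unfold ind; by_cases hP : P <;> by_cases hQ : Q <;> simp [hP, hQ]

lemma ind_or {P Q : Prop} (h : ¬ (P ∧ Q)) : ind (P ∨ Q) = ind P + ind Q := by
  unfold ind
  by_cases hP : P <;> by_cases hQ : Q <;> simp [hP, hQ]
  exact h ⟨hP, hQ⟩

lemma probOn_eq_psum (p : ℝ) (R : Finset (ℤ × ℤ)) (E : Finset (ℤ × ℤ) → Prop) :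
    probOn p R E = psum p R (fun A => ind (E A)) := rfl

lemma probOn_congr {p : ℝ} {R : Finset (ℤ × ℤ)} {E E' : Finset (ℤ × ℤ) → Prop}
    (h : ∀ A ⊆ R, (E A ↔ E' A)) : probOn p R E = probOn p R E' := by
  rw [probOn_eq_psum, probOn_eq_psum]
  exact psum_congr fun A hA => ind_congr (h A hA)

lemma probOn_or (p : ℝ) (R : Finset (ℤ × ℤ)) (E₁ E₂ : Finset (ℤ × ℤ) → Prop)
    (hdis : ∀ A, ¬ (E₁ A ∧ E₂ A)) :
    probOn p R (fun A => E₁ A ∨ E₂ A) = probOn p R E₁ + probOn p R E₂ := by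
  rw [probOn_eq_psum, probOn_eq_psum, probOn_eq_psum, ← psum_add]
  exact psum_congr fun A _ => ind_or (hdis A)

lemma probOn_and (p : ℝ) {s t : Finset (ℤ × ℤ)} (hd : Disjoint s t)
    (E₁ E₂ : Finset (ℤ × ℤ) → Prop)
    (h₁ : ∀ A, E₁ A ↔ E₁ (A ∩ s))
    (h₂ : ∀ A, E₂ A ↔ E₂ (A ∩ t)) :
    probOn p (s ∪ t) (fun A => E₁ A ∧ E₂ A) = probOn p s E₁ * probOn p t E₂ := by
  rw [probOn_eq_psum, probOn_eq_psum, probOn_eq_psum]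
  have key : psum p (s ∪ t) (fun A => ind (E₁ A ∧ E₂ A))
      = psum p (s ∪ t) (fun A => ind (E₁ (A ∩ s)) * ind (E₂ (A ∩ t))) :=
    psum_congr fun A _ => by rw [ind_and]; rw [ind_congr (h₁ A), ind_congr (h₂ A)]
  rw [key, psum_prod p hd (fun B => ind (E₁ B)) (fun D => ind (E₂ D))]
  congr 1
  · exact psum_congr fun A _ => ind_congr (h₁ A).symm
  · exact psum_congr fun A _ => ind_congr (h₂ A).symm

lemma probOn_true (p : ℝ) (R : Finset (ℤ × ℤ)) : probOn p R (fun _ => True) = 1 := by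
  rw [probOn_eq_psum]
  rw [psum_congr (G := fun _ => (1:ℝ)) fun A _ => ind_true, psum_const]

/-- column as a finset -/
noncomputable def colF (y0 : ℤ) (b : ℕ) (i : ℤ) : Finset (ℤ × ℤ) :=
  ({i} : Finset ℤ) ×ˢ Finset.Icc y0 (y0 + (b : ℤ) - 1)

lemma card_colF (y0 : ℤ) (b : ℕ) (i : ℤ) : (colF y0 b i).card = b := by
  rw [colF, Finset.card_product, Finset.card_singleton, Int.card_Icc]
  omega

lemma colOcc_iff_nonempty {A : Finset (ℤ × ℤ)} {y0 : ℤ} {b : ℕ} {i : ℤ}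
    (hA : A ⊆ colF y0 b i) : colOcc A y0 b i ↔ A.Nonempty := by
  constructor
  · rintro ⟨y, _, hy⟩; exact ⟨(i, y), hy⟩
  · rintro ⟨⟨x, y⟩, hxy⟩
    have := hA hxy
    rw [colF, Finset.mem_product, Finset.mem_singleton] at this
    obtain ⟨rfl, hy⟩ := this
    exact ⟨y, hy, hxy⟩

lemma psum_ind_empty (p : ℝ) (R : Finset α) :
    psum p R (fun A => ind (A = ∅)) = (1 - p) ^ R.card := by
  unfold psum
  rw [Finset.sum_eq_single_of_mem ∅ (Finset.empty_mem_powerset R)]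
  · simp [ind]
  · intro A _ hne; simp [ind, hne]

lemma probOn_not_colOcc (p : ℝ) (y0 : ℤ) (b : ℕ) (i : ℤ) :
    probOn p (colF y0 b i) (fun A => ¬ colOcc A y0 b i) = (1 - p) ^ b := by
  rw [probOn_eq_psum]
  have key : psum p (colF y0 b i) (fun A => ind (¬ colOcc A y0 b i))
      = psum p (colF y0 b i) (fun A => ind (A = ∅)) := by
    refine psum_congr fun A hA => ind_congr ?_
    rw [colOcc_iff_nonempty hA, Finset.nonempty_iff_ne_empty]
    tauto
  rw [key, psum_ind_empty, card_colF]

lemma probOn_colOcc (p : ℝ) (y0 : ℤ) (b : ℕ) (i : ℤ) :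
    probOn p (colF y0 b i) (fun A => colOcc A y0 b i) = 1 - (1 - p) ^ b := by
  rw [probOn_eq_psum]
  have key : psum p (colF y0 b i) (fun A => ind (colOcc A y0 b i))
      = psum p (colF y0 b i) (fun A => 1 + (ind (A = ∅)) * (-1)) := by
    refine psum_congr fun A hA => ?_
    rw [ind_congr (colOcc_iff_nonempty hA), Finset.nonempty_iff_ne_empty]
    by_cases h : A = ∅ <;> simp [ind, h]
  rw [key, psum_add, psum_const, psum_mul_const, psum_ind_empty, card_colF]
  ring

section Geometry

variable {x0 y0 : ℤ} {b : ℕ}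

lemma colOcc_inter {A S : Finset (ℤ × ℤ)} {i : ℤ}
    (hS : ∀ y, y ∈ Finset.Icc y0 (y0 + (b : ℤ) - 1) → (i, y) ∈ S) :
    colOcc A y0 b i ↔ colOcc (A ∩ S) y0 b i := by
  constructor
  · rintro ⟨y, hy, hA⟩; exact ⟨y, hy, Finset.mem_inter.mpr ⟨hA, hS y hy⟩⟩
  · rintro ⟨y, hy, hA⟩; exact ⟨y, hy, (Finset.mem_inter.mp hA).1⟩

lemma colOcc_inter_col (A : Finset (ℤ × ℤ)) (i : ℤ) :
    colOcc A y0 b i ↔ colOcc (A ∩ colF y0 b i) y0 b i :=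
  colOcc_inter fun y hy => by
    rw [colF, Finset.mem_product, Finset.mem_singleton]; exact ⟨rfl, hy⟩

lemma colOcc_inter_rect {A : Finset (ℤ × ℤ)} {i X : ℤ} (h1 : x0 ≤ i) (h2 : i ≤ X) :
    colOcc A y0 b i ↔ colOcc (A ∩ rectF x0 y0 X (y0 + (b : ℤ) - 1)) y0 b i :=
  colOcc_inter fun y hy => by
    rw [rectF, Finset.mem_product, Finset.mem_Icc, Finset.mem_Icc]
    rw [Finset.mem_Icc] at hy
    exact ⟨⟨h1, h2⟩, hy⟩

lemma crossed_congr {m : ℕ} (hm : 1 ≤ m) {A B : Finset (ℤ × ℤ)}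
    (h : ∀ i, x0 ≤ i → i ≤ x0 + (m : ℤ) - 1 → (colOcc A y0 b i ↔ colOcc B y0 b i)) :
    Crossed x0 y0 m b A ↔ Crossed x0 y0 m b B := by
  unfold Crossed
  constructor <;> rintro ⟨h1, h2⟩
  · refine ⟨fun i hi1 hi2 => ?_, (h _ (by omega) (by omega)).mp h2⟩
    exact (h1 i hi1 hi2).imp (h i (by omega) (by omega)).mp (h (i+1) (by omega) (by omega)).mp
  · refine ⟨fun i hi1 hi2 => ?_, (h _ (by omega) (by omega)).mpr h2⟩
    exact (h1 i hi1 hi2).imp (h i (by omega) (by omega)).mpr (h (i+1) (by omega) (by omega)).mpr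

lemma crossed_inter_rect {m : ℕ} (hm : 1 ≤ m) {X : ℤ} (hX : x0 + (m : ℤ) - 1 ≤ X)
    (A : Finset (ℤ × ℤ)) :
    Crossed x0 y0 m b A ↔ Crossed x0 y0 m b (A ∩ rectF x0 y0 X (y0 + (b : ℤ) - 1)) :=
  crossed_congr hm fun i hi1 hi2 => colOcc_inter_rect hi1 (by omega)

lemma crossed_one (A : Finset (ℤ × ℤ)) :
    Crossed x0 y0 1 b A ↔ colOcc A y0 b x0 := by
  unfold Crossed
  have e : x0 + ((1 : ℕ) : ℤ) - 1 = x0 := by push_cast; ring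
  rw [e]
  constructor
  · rintro ⟨_, h2⟩; exact h2
  · intro h; exact ⟨fun i hi1 hi2 => absurd hi2 (by omega), h⟩

lemma crossed_two (A : Finset (ℤ × ℤ)) :
    Crossed x0 y0 2 b A ↔ colOcc A y0 b (x0 + 1) := by
  unfold Crossed
  have e : x0 + ((2 : ℕ) : ℤ) - 1 = x0 + 1 := by push_cast; ring
  rw [e]
  constructor
  · rintro ⟨_, h2⟩; exact h2
  · intro h
    refine ⟨fun i hi1 hi2 => ?_, h⟩
    have : i + 1 = x0 + 1 := by omega
    right; rw [this]; exact h

lemma crossed_split (k : ℕ) (A : Finset (ℤ × ℤ)) :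
    Crossed x0 y0 (k+3) b A ↔
      ((Crossed x0 y0 (k+2) b A ∧ colOcc A y0 b (x0 + (k : ℤ) + 2)) ∨
       (Crossed x0 y0 (k+1) b A ∧
         (¬ colOcc A y0 b (x0 + (k : ℤ) + 1) ∧ colOcc A y0 b (x0 + (k : ℤ) + 2)))) := by
  unfold Crossed
  have e3 : x0 + ((k+3 : ℕ) : ℤ) - 1 = x0 + (k : ℤ) + 2 := by push_cast; ring
  have e2 : x0 + ((k+2 : ℕ) : ℤ) - 1 = x0 + (k : ℤ) + 1 := by push_cast; ring
  have e1 : x0 + ((k+1 : ℕ) : ℤ) - 1 = x0 + (k : ℤ) := by push_cast; ring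
  rw [e3, e2, e1]
  constructor
  · rintro ⟨h1, h2⟩
    by_cases hM : colOcc A y0 b (x0 + (k : ℤ) + 1)
    · left; exact ⟨⟨fun i hi1 hi2 => h1 i hi1 (by omega), hM⟩, h2⟩
    · right
      refine ⟨⟨fun i hi1 hi2 => h1 i hi1 (by omega), ?_⟩, hM, h2⟩
      have h3 := h1 (x0 + (k : ℤ)) (by omega) (by omega)
      rcases h3 with h | h
      · exact h
      · have e : x0 + (k : ℤ) + 1 = x0 + (k : ℤ) + 1 := rfl
        exact absurd h hM
  · rintro (⟨⟨h1, hM⟩, h2⟩ | ⟨⟨h1, hlast⟩, hM, h2⟩)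
    · refine ⟨fun i hi1 hi2 => ?_, h2⟩
      by_cases hc : i + 1 ≤ x0 + (k : ℤ) + 1
      · exact h1 i hi1 hc
      · have e : i + 1 = x0 + (k : ℤ) + 2 := by omega
        right; rw [e]; exact h2
    · refine ⟨fun i hi1 hi2 => ?_, h2⟩
      by_cases hc : i + 1 ≤ x0 + (k : ℤ)
      · exact h1 i hi1 hc
      · by_cases hc2 : i + 1 = x0 + (k : ℤ) + 1
        · left
          have e : i = x0 + (k : ℤ) := by omega
          rw [e]; exact hlast
        · right
          have e : i + 1 = x0 + (k : ℤ) + 2 := by omega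
          rw [e]; exact h2

lemma disj_rect_col {X i : ℤ} (h : X < i) :
    Disjoint (rectF x0 y0 X (y0 + (b : ℤ) - 1)) (colF y0 b i) := by
  rw [Finset.disjoint_left]
  rintro ⟨x, y⟩ hx hy
  rw [rectF, Finset.mem_product, Finset.mem_Icc, Finset.mem_Icc] at hx
  rw [colF, Finset.mem_product, Finset.mem_singleton] at hy
  omega

lemma disj_col_col {i j : ℤ} (h : i ≠ j) :
    Disjoint (colF y0 b i) (colF y0 b j) := by
  rw [Finset.disjoint_left]
  rintro ⟨x, y⟩ hx hy
  rw [colF, Finset.mem_product, Finset.mem_singleton] at hx hy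
  exact h (hx.1 ▸ hy.1 ▸ rfl)

end Geometry

section BetaFacts

variable {u : ℝ}

lemma beta_pos (hu0 : 0 < u) : 0 < beta u := by
  unfold beta
  have := Real.sqrt_nonneg (u * (4 - 3 * u))
  linarith

lemma beta_quad (hu0 : 0 < u) (hu1 : u < 1) : beta u ^ 2 = u * beta u + u * (1 - u) := by
  unfold beta
  have h : Real.sqrt (u * (4 - 3 * u)) ^ 2 = u * (4 - 3 * u) :=
    Real.sq_sqrt (by nlinarith)
  nlinarith [h, Real.sqrt_nonneg (u * (4 - 3 * u))]

lemma le_beta (hu0 : 0 < u) (hu1 : u < 1) : u ≤ beta u := by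
  unfold beta
  have h1 : Real.sqrt (u ^ 2) ≤ Real.sqrt (u * (4 - 3 * u)) :=
    Real.sqrt_le_sqrt (by nlinarith)
  rw [Real.sqrt_sq hu0.le] at h1
  linarith

lemma beta_le_one (hu0 : 0 < u) (hu1 : u < 1) : beta u ≤ 1 := by
  unfold beta
  have h1 : Real.sqrt (u * (4 - 3 * u)) ≤ Real.sqrt ((2 - u) ^ 2) :=
    Real.sqrt_le_sqrt (by nlinarith)
  rw [Real.sqrt_sq (by linarith)] at h1
  linarith

end BetaFacts

lemma main_bound (p : ℝ) (hp0 : 0 < p) (hp1 : p < 1) (b : ℕ) (hb : 0 < b)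
    (x0 y0 : ℤ) (n : ℕ) :
    probOn p (rectF x0 y0 (x0 + ((n+1 : ℕ) : ℤ) - 1) (y0 + (b : ℤ) - 1))
        (Crossed x0 y0 (n+1) b)
      ≤ beta (1 - (1 - p) ^ b) ^ (n+1) := by
  have h1p0 : 0 < 1 - p := by linarith
  have h1p1 : 1 - p < 1 := by linarith
  set ε : ℝ := (1 - p) ^ b with hε
  have hε0 : 0 < ε := pow_pos h1p0 b
  have hε1 : ε < 1 := pow_lt_one₀ h1p0.le h1p1 hb.ne'
  set u : ℝ := 1 - ε with hudef
  have hu0 : 0 < u := by simp only [hudef]; linarith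
  have hu1 : u < 1 := by simp only [hudef]; linarith
  have hβpos : 0 < beta u := beta_pos hu0
  have hβ1 : beta u ≤ 1 := beta_le_one hu0 hu1
  have huβ : u ≤ beta u := le_beta hu0 hu1
  have hquad : beta u ^ 2 = u * beta u + u * (1 - u) := beta_quad hu0 hu1
  -- column probabilities
  have hcol : ∀ i : ℤ, probOn p (colF y0 b i) (fun A => colOcc A y0 b i) = u := by
    intro i; rw [probOn_colOcc]
  have hcoln : ∀ i : ℤ, probOn p (colF y0 b i) (fun A => ¬ colOcc A y0 b i) = ε := by
    intro i; rw [probOn_not_colOcc]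
  induction n using Nat.strong_induction_on with
  | _ n IH =>
    match n, IH with
    | 0, _ =>
      -- a = 1
      have hset : rectF x0 y0 (x0 + ((0+1 : ℕ) : ℤ) - 1) (y0 + (b : ℤ) - 1)
          = colF y0 b x0 := by
        ext ⟨x, y⟩
        simp only [rectF, colF, Finset.mem_product, Finset.mem_Icc, Finset.mem_singleton]
        constructor
        · rintro ⟨h1, h2⟩; exact ⟨by omega, h2⟩
        · rintro ⟨rfl, h2⟩; exact ⟨by omega, h2⟩
      rw [hset, probOn_congr (fun A _ => crossed_one A), hcol x0, pow_one]
      exact huβ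
    | 1, _ =>
      -- a = 2
      have hset : rectF x0 y0 (x0 + ((1+1 : ℕ) : ℤ) - 1) (y0 + (b : ℤ) - 1)
          = colF y0 b x0 ∪ colF y0 b (x0 + 1) := by
        ext ⟨x, y⟩
        simp only [rectF, colF, Finset.mem_product, Finset.mem_Icc, Finset.mem_singleton,
          Finset.mem_union]
        omega
      rw [hset, probOn_congr (E' := fun A => True ∧ colOcc A y0 b (x0+1))
        (fun A _ => by rw [crossed_two A]; tauto)]
      rw [probOn_and p (disj_col_col (by omega)) (fun _ => True)
        (fun A => colOcc A y0 b (x0+1)) (fun A => Iff.rfl)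
        (fun A => colOcc_inter_col A (x0+1))]
      rw [probOn_true, hcol, one_mul]
      have e2 : beta u ^ (1+1) = u * beta u + u * (1 - u) := by
        rw [show (1+1) = 2 from rfl, hquad]
      rw [e2]
      nlinarith [huβ, hu0, hu1]
    | (k+2), IH =>
      have IH1 := IH (k+1) (by omega)
      have IH0 := IH k (by omega)
      -- a = k+3
      set L : ℤ := x0 + (k : ℤ) + 2 with hL
      set M : ℤ := x0 + (k : ℤ) + 1 with hM
      have hsetEq : x0 + ((k+2+1 : ℕ) : ℤ) - 1 = L := by push_cast; simp only [hL]; ring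
      rw [hsetEq]
      set R2 : Finset (ℤ × ℤ) := rectF x0 y0 (x0 + ((k+1+1 : ℕ) : ℤ) - 1) (y0 + (b : ℤ) - 1)
        with hR2
      set R1 : Finset (ℤ × ℤ) := rectF x0 y0 (x0 + ((k+1 : ℕ) : ℤ) - 1) (y0 + (b : ℤ) - 1)
        with hR1
      have hsplit3 : rectF x0 y0 L (y0 + (b : ℤ) - 1) = R2 ∪ colF y0 b L := by
        ext ⟨x, y⟩
        simp only [hR2, rectF, colF, Finset.mem_product, Finset.mem_Icc, Finset.mem_singleton,
          Finset.mem_union, hL]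
        omega
      have hsplit2 : rectF x0 y0 L (y0 + (b : ℤ) - 1) = R1 ∪ (colF y0 b M ∪ colF y0 b L) := by
        ext ⟨x, y⟩
        simp only [hR1, rectF, colF, Finset.mem_product, Finset.mem_Icc, Finset.mem_singleton,
          Finset.mem_union, hL, hM]
        omega
      have hor : probOn p (rectF x0 y0 L (y0 + (b : ℤ) - 1)) (Crossed x0 y0 (k+2+1) b)
          = probOn p (rectF x0 y0 L (y0 + (b : ℤ) - 1))
              (fun A => Crossed x0 y0 (k+2) b A ∧ colOcc A y0 b L)
          + probOn p (rectF x0 y0 L (y0 + (b : ℤ) - 1))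
              (fun A => Crossed x0 y0 (k+1) b A ∧ (¬ colOcc A y0 b M ∧ colOcc A y0 b L)) := by
        rw [probOn_congr (fun A _ => crossed_split k A)]
        apply probOn_or
        rintro A ⟨⟨hc2, _⟩, ⟨_, hnM, _⟩⟩
        apply hnM
        have := hc2.2
        have e : x0 + ((k+2 : ℕ) : ℤ) - 1 = M := by push_cast; simp only [hM]; ring
        rwa [e] at this
      rw [hor]
      have term1 : probOn p (rectF x0 y0 L (y0 + (b : ℤ) - 1))
          (fun A => Crossed x0 y0 (k+2) b A ∧ colOcc A y0 b L)
          = probOn p R2 (Crossed x0 y0 (k+2) b) * u := by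
        rw [hsplit3]
        rw [probOn_and p (by apply disj_rect_col; push_cast; omega) _ _
          (fun A => crossed_inter_rect (by omega) (by push_cast; omega) A)
          (fun A => colOcc_inter_col A L)]
        rw [hcol]
      have term2 : probOn p (rectF x0 y0 L (y0 + (b : ℤ) - 1))
          (fun A => Crossed x0 y0 (k+1) b A ∧ (¬ colOcc A y0 b M ∧ colOcc A y0 b L))
          = probOn p R1 (Crossed x0 y0 (k+1) b) * (ε * u) := by
        rw [hsplit2]
        rw [probOn_and p ?disj _ _
          (fun A => crossed_inter_rect (by omega) (by push_cast; omega) A)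
          ?loc]
        case disj =>
          apply Finset.disjoint_union_right.mpr
          constructor
          · apply disj_rect_col; push_cast; omega
          · apply disj_rect_col; push_cast; omega
        case loc =>
          intro A
          have iffM : colOcc A y0 b M ↔ colOcc (A ∩ (colF y0 b M ∪ colF y0 b L)) y0 b M :=
            colOcc_inter fun y hy => Finset.mem_union_left _ (by
              rw [colF, Finset.mem_product, Finset.mem_singleton]; exact ⟨rfl, hy⟩)
          have iffL : colOcc A y0 b L ↔ colOcc (A ∩ (colF y0 b M ∪ colF y0 b L)) y0 b L :=
            colOcc_inter fun y hy => Finset.mem_union_right _ (by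
              rw [colF, Finset.mem_product, Finset.mem_singleton]; exact ⟨rfl, hy⟩)
          exact and_congr (not_congr iffM) iffL
        rw [probOn_and p (disj_col_col (by omega)) _ _
          (fun A => (not_congr (colOcc_inter_col A M)))
          (fun A => colOcc_inter_col A L)]
        rw [hcoln, hcol]
      rw [term1, term2]
      have hb1 : probOn p R2 (Crossed x0 y0 (k+2) b) ≤ beta u ^ (k+2) := IH1
      have hb0 : probOn p R1 (Crossed x0 y0 (k+1) b) ≤ beta u ^ (k+1) := IH0
      have hεu : 0 ≤ ε * u := by positivity
      calc probOn p R2 (Crossed x0 y0 (k+2) b) * u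
            + probOn p R1 (Crossed x0 y0 (k+1) b) * (ε * u)
          ≤ beta u ^ (k+2) * u + beta u ^ (k+1) * (ε * u) := by
            apply add_le_add
            · exact mul_le_mul_of_nonneg_right hb1 hu0.le
            · exact mul_le_mul_of_nonneg_right hb0 hεu
        _ = beta u ^ (k+1) * (u * beta u + u * (1 - u)) := by
            have : ε = 1 - u := by simp [hudef]
            rw [this]; ring
        _ = beta u ^ (k+1) * beta u ^ 2 := by rw [hquad]
        _ = beta u ^ (k+2+1) := by ring

end Aux

/-- The probability that an `a × b` rectangle is crossed from left to right is at
most `e^{-a g(bq)}`, where `q = -log(1-p)`. -/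
theorem stmt14 (p : ℝ) (hp0 : 0 < p) (hp1 : p < 1) (a b : ℕ) (ha : 0 < a)
    (hb : 0 < b) (x0 y0 : ℤ) :
    probOn p (rectF x0 y0 (x0 + a - 1) (y0 + b - 1)) (Crossed x0 y0 a b)
      ≤ Real.exp (-(a : ℝ) * gfun ((b : ℝ) * (-Real.log (1 - p)))) := by
  obtain ⟨n, rfl⟩ : ∃ n, a = n + 1 := ⟨a - 1, by omega⟩
  have h1p0 : 0 < 1 - p := by linarith
  have hε0 : 0 < (1 - p) ^ b := pow_pos h1p0 b
  have hε1 : (1 - p) ^ b < 1 := pow_lt_one₀ h1p0.le (by linarith) hb.ne'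
  set u : ℝ := 1 - (1 - p) ^ b with hu
  have hu0 : 0 < u := by simp only [hu]; linarith
  have hβpos : 0 < beta u := Aux.beta_pos hu0
  have hexp : Real.exp (-((b : ℝ) * (-Real.log (1 - p)))) = (1 - p) ^ b := by
    rw [mul_neg, neg_neg, Real.exp_nat_mul, Real.exp_log h1p0]
  have hg : gfun ((b : ℝ) * (-Real.log (1 - p))) = -Real.log (beta u) := by
    rw [gfun, hexp]
  rw [hg]
  have hrhs : Real.exp (-((n+1 : ℕ) : ℝ) * -Real.log (beta u)) = beta u ^ (n+1) := by
    rw [neg_mul_neg, Real.exp_nat_mul, Real.exp_log hβpos]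
  rw [hrhs]
  exact Aux.main_bound p hp0 hp1 b hb x0 y0 n
end

section
/- Let R = [m]×[n] and let A ⊆ R. Consider the bipartite graph G whose vertex set is the set of m rows and n columns of R, with an edge between row x and column y iff (x,y) ∈ A. If G is disconnected, then there exist a set X of rows and a set Y of columns such that A ⊆ S := (X × Y) ∪ (X^c × Y^c), S is closed under the Froböse bootstrap rule, and S ≠ R; hence A does not span R. -/
def frobClosure (R A : Set (ℤ × ℤ)) : Set (ℤ × ℤ) :=
  ⋂₀ {B | A ⊆ B ∧ ∀ v ∈ R,
    (∃ ε : ℤ, (ε = 1 ∨ ε = -1) ∧ ∃ δ : ℤ, (δ = 1 ∨ δ = -1) ∧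
      (v.1 + ε, v.2) ∈ B ∧ (v.1, v.2 + δ) ∈ B ∧ (v.1 + ε, v.2 + δ) ∈ B) → v ∈ B}

/-- The bipartite graph on the `m` rows and `n` columns of `[m] × [n]`, with an
edge between row `x` and column `y` iff `(x,y) ∈ A`. Row `i : Fin m` represents
the row `x = i + 1`, and similarly for columns. -/
def rowColGraph (m n : ℕ) (A : Set (ℤ × ℤ)) : SimpleGraph (Fin m ⊕ Fin n) where
  Adj u v :=
    (∃ (x : Fin m) (y : Fin n), u = Sum.inl x ∧ v = Sum.inr y ∧
      ((x : ℤ) + 1, (y : ℤ) + 1) ∈ A) ∨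
    (∃ (x : Fin m) (y : Fin n), u = Sum.inr y ∧ v = Sum.inl x ∧
      ((x : ℤ) + 1, (y : ℤ) + 1) ∈ A)
  symm := by
    constructor
    rintro u v (⟨x, y, rfl, rfl, h⟩ | ⟨x, y, rfl, rfl, h⟩)
    · exact Or.inr ⟨x, y, rfl, rfl, h⟩
    · exact Or.inl ⟨x, y, rfl, rfl, h⟩
  loopless := by
    constructor
    rintro u (⟨x, y, rfl, h, _⟩ | ⟨x, y, rfl, h, _⟩) <;> simp at h

/-- The set `S = (X × Y) ∪ (Xᶜ × Yᶜ)` inside the rectangle `[m] × [n]`. -/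
def frobS (m n : ℕ) (X Y : Set ℤ) : Set (ℤ × ℤ) :=
  {v ∈ rectZ 1 1 (m : ℤ) (n : ℤ) | (v.1 ∈ X ∧ v.2 ∈ Y) ∨ (v.1 ∉ X ∧ v.2 ∉ Y)}

lemma frobS_mem {m n : ℕ} {X Y : Set ℤ} {v : ℤ × ℤ} :
    v ∈ frobS m n X Y ↔ v ∈ rectZ 1 1 (m : ℤ) (n : ℤ) ∧
      ((v.1 ∈ X ∧ v.2 ∈ Y) ∨ (v.1 ∉ X ∧ v.2 ∉ Y)) := Iff.rfl

lemma frobS_closed (m n : ℕ) (X Y : Set ℤ) :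
    ∀ v ∈ rectZ 1 1 (m : ℤ) (n : ℤ),
    (∃ ε : ℤ, (ε = 1 ∨ ε = -1) ∧ ∃ δ : ℤ, (δ = 1 ∨ δ = -1) ∧
      (v.1 + ε, v.2) ∈ frobS m n X Y ∧ (v.1, v.2 + δ) ∈ frobS m n X Y ∧
      (v.1 + ε, v.2 + δ) ∈ frobS m n X Y) → v ∈ frobS m n X Y := by
  rintro ⟨x, y⟩ hv ⟨ε, _, δ, _, h1, h2, h3⟩
  obtain ⟨_, c1⟩ := h1
  obtain ⟨_, c2⟩ := h2
  obtain ⟨_, c3⟩ := h3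
  exact ⟨hv, by simp only at c1 c2 c3 ⊢; tauto⟩

lemma frobS_mem_family (m n : ℕ) (X Y : Set ℤ) :
    frobS m n X Y ∈ {B | frobS m n X Y ⊆ B ∧ ∀ v ∈ rectZ 1 1 (m : ℤ) (n : ℤ),
    (∃ ε : ℤ, (ε = 1 ∨ ε = -1) ∧ ∃ δ : ℤ, (δ = 1 ∨ δ = -1) ∧
      (v.1 + ε, v.2) ∈ B ∧ (v.1, v.2 + δ) ∈ B ∧ (v.1 + ε, v.2 + δ) ∈ B) → v ∈ B} :=
  ⟨subset_rfl, frobS_closed m n X Y⟩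

lemma frobClosure_frobS (m n : ℕ) (X Y : Set ℤ) :
    frobClosure (rectZ 1 1 (m : ℤ) (n : ℤ)) (frobS m n X Y) = frobS m n X Y := by
  apply subset_antisymm
  · exact Set.sInter_subset_of_mem (frobS_mem_family m n X Y)
  · exact Set.subset_sInter fun B hB => hB.1

/-- If the row–column bipartite graph of `A ⊆ [m] × [n]` is disconnected, then
there are sets `X` of rows and `Y` of columns such that
`A ⊆ S = (X × Y) ∪ (Xᶜ × Yᶜ)`, `S` is closed under the Froböse rule, and
`S ≠ R`; hence `A` does not span `R`. -/
theorem stmt19 (m n : ℕ) (hm : 0 < m) (hn : 0 < n) (A : Set (ℤ × ℤ))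
    (hA : A ⊆ rectZ 1 1 (m : ℤ) (n : ℤ))
    (hdisc : ¬ (rowColGraph m n A).Connected) :
    ∃ X Y : Set ℤ,
      A ⊆ frobS m n X Y ∧
      frobClosure (rectZ 1 1 (m : ℤ) (n : ℤ)) (frobS m n X Y) = frobS m n X Y ∧
      frobS m n X Y ≠ rectZ 1 1 (m : ℤ) (n : ℤ) ∧
      ¬ rectZ 1 1 (m : ℤ) (n : ℤ) ⊆ frobClosure (rectZ 1 1 (m : ℤ) (n : ℤ)) A := by
  set G := rowColGraph m n A with hG
  have hne : Nonempty (Fin m ⊕ Fin n) := ⟨Sum.inl ⟨0, hm⟩⟩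
  haveI := hne
  have hpre : ¬ G.Preconnected := fun h => hdisc (SimpleGraph.Connected.mk h)
  rw [SimpleGraph.Preconnected] at hpre
  push_neg at hpre
  obtain ⟨u, w, huw⟩ := hpre
  set X : Set ℤ := {x | ∃ i : Fin m, x = (i : ℤ) + 1 ∧ G.Reachable u (Sum.inl i)} with hX
  set Y : Set ℤ := {y | ∃ j : Fin n, y = (j : ℤ) + 1 ∧ G.Reachable u (Sum.inr j)} with hY
  -- helper facts
  have rowX : ∀ i : Fin m, ((i : ℤ) + 1 ∈ X ↔ G.Reachable u (Sum.inl i)) := by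
    intro i
    constructor
    · rintro ⟨i', hi', hr⟩
      have : i' = i := by
        have : (i' : ℤ) = (i : ℤ) := by omega
        exact Fin.ext (by exact_mod_cast this)
      rwa [this] at hr
    · intro hr; exact ⟨i, rfl, hr⟩
  have colY : ∀ j : Fin n, ((j : ℤ) + 1 ∈ Y ↔ G.Reachable u (Sum.inr j)) := by
    intro j
    constructor
    · rintro ⟨j', hj', hr⟩
      have : j' = j := by
        have : (j' : ℤ) = (j : ℤ) := by omega
        exact Fin.ext (by exact_mod_cast this)
      rwa [this] at hr
    · intro hr; exact ⟨j, rfl, hr⟩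
  refine ⟨X, Y, ?_, frobClosure_frobS m n X Y, ?_, ?_⟩
  · -- A ⊆ frobS
    rintro ⟨x, y⟩ hv
    have hrect := hA hv
    obtain ⟨hx1, hxm, hy1, hyn⟩ := hrect
    simp only at hx1 hxm hy1 hyn
    have hi : (x - 1).toNat < m := by omega
    have hj : (y - 1).toNat < n := by omega
    set i : Fin m := ⟨(x - 1).toNat, hi⟩
    set j : Fin n := ⟨(y - 1).toNat, hj⟩
    have hxi : (i : ℤ) + 1 = x := by simp [i]; omega
    have hyj : (j : ℤ) + 1 = y := by simp [j]; omega
    have hadj : G.Adj (Sum.inl i) (Sum.inr j) := by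
      refine Or.inl ⟨i, j, rfl, rfl, ?_⟩
      rwa [hxi, hyj]
    refine ⟨hA hv, ?_⟩
    simp only
    rw [← hxi, ← hyj, rowX i, colY j]
    by_cases hr : G.Reachable u (Sum.inl i)
    · exact Or.inl ⟨hr, hr.trans hadj.reachable⟩
    · exact Or.inr ⟨hr, fun h => hr (h.trans hadj.symm.reachable)⟩
  · -- frobS ≠ rect
    have key : ∃ v ∈ rectZ 1 1 (m : ℤ) (n : ℤ), v ∉ frobS m n X Y := by
      match u, w with
      | Sum.inl i0, Sum.inl i =>
        have h0 : (i0 : ℤ) + 1 ∈ X := (rowX i0).2 (SimpleGraph.Reachable.refl _)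
        have hi : (i : ℤ) + 1 ∉ X := fun h => huw ((rowX i).1 h)
        by_cases h1 : (1 : ℤ) ∈ Y
        · refine ⟨((i : ℤ) + 1, 1), ⟨by omega, by omega, le_refl _, by omega⟩, ?_⟩
          rintro ⟨_, (⟨ha, _⟩ | ⟨_, hb⟩)⟩
          · exact hi ha
          · exact hb h1
        · refine ⟨((i0 : ℤ) + 1, 1), ⟨by omega, by omega, le_refl _, by omega⟩, ?_⟩
          rintro ⟨_, (⟨_, hb⟩ | ⟨ha, _⟩)⟩
          · exact h1 hb
          · exact ha h0
      | Sum.inl i0, Sum.inr j =>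
        have h0 : (i0 : ℤ) + 1 ∈ X := (rowX i0).2 (SimpleGraph.Reachable.refl _)
        have hj : (j : ℤ) + 1 ∉ Y := fun h => huw ((colY j).1 h)
        refine ⟨((i0 : ℤ) + 1, (j : ℤ) + 1), ⟨by omega, by omega, by omega, by omega⟩, ?_⟩
        rintro ⟨_, (⟨_, hb⟩ | ⟨ha, _⟩)⟩
        · exact hj hb
        · exact ha h0
      | Sum.inr j0, Sum.inl i =>
        have h0 : (j0 : ℤ) + 1 ∈ Y := (colY j0).2 (SimpleGraph.Reachable.refl _)
        have hi : (i : ℤ) + 1 ∉ X := fun h => huw ((rowX i).1 h)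
        refine ⟨((i : ℤ) + 1, (j0 : ℤ) + 1), ⟨by omega, by omega, by omega, by omega⟩, ?_⟩
        rintro ⟨_, (⟨ha, _⟩ | ⟨_, hb⟩)⟩
        · exact hi ha
        · exact hb h0
      | Sum.inr j0, Sum.inr j =>
        have h0 : (j0 : ℤ) + 1 ∈ Y := (colY j0).2 (SimpleGraph.Reachable.refl _)
        have hj : (j : ℤ) + 1 ∉ Y := fun h => huw ((colY j).1 h)
        by_cases h1 : (1 : ℤ) ∈ X
        · refine ⟨(1, (j : ℤ) + 1), ⟨le_refl _, by omega, by omega, by omega⟩, ?_⟩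
          rintro ⟨_, (⟨_, hb⟩ | ⟨ha, _⟩)⟩
          · exact hj hb
          · exact ha h1
        · refine ⟨(1, (j0 : ℤ) + 1), ⟨le_refl _, by omega, by omega, by omega⟩, ?_⟩
          rintro ⟨_, (⟨ha, _⟩ | ⟨_, hb⟩)⟩
          · exact h1 ha
          · exact hb h0
    obtain ⟨v, hvR, hvS⟩ := key
    intro heq
    exact hvS (heq ▸ hvR)
  · -- A does not span
    have hAS : A ⊆ frobS m n X Y := by
      rintro ⟨x, y⟩ hv
      obtain ⟨hx1, hxm, hy1, hyn⟩ := hA hv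
      simp only at hx1 hxm hy1 hyn
      have hi : (x - 1).toNat < m := by omega
      have hj : (y - 1).toNat < n := by omega
      set i : Fin m := ⟨(x - 1).toNat, hi⟩
      set j : Fin n := ⟨(y - 1).toNat, hj⟩
      have hxi : (i : ℤ) + 1 = x := by simp [i]; omega
      have hyj : (j : ℤ) + 1 = y := by simp [j]; omega
      have hadj : G.Adj (Sum.inl i) (Sum.inr j) := by
        refine Or.inl ⟨i, j, rfl, rfl, ?_⟩
        rwa [hxi, hyj]
      refine ⟨hA hv, ?_⟩
      simp only
      rw [← hxi, ← hyj, rowX i, colY j]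
      by_cases hr : G.Reachable u (Sum.inl i)
      · exact Or.inl ⟨hr, hr.trans hadj.reachable⟩
      · exact Or.inr ⟨hr, fun h => hr (h.trans hadj.symm.reachable)⟩
    have hsub : frobClosure (rectZ 1 1 (m : ℤ) (n : ℤ)) A ⊆ frobS m n X Y :=
      Set.sInter_subset_of_mem ⟨hAS, frobS_closed m n X Y⟩
    -- reuse the ≠ point
    have key : ∃ v ∈ rectZ 1 1 (m : ℤ) (n : ℤ), v ∉ frobS m n X Y := by
      match u, w with
      | Sum.inl i0, Sum.inl i =>
        have h0 : (i0 : ℤ) + 1 ∈ X := (rowX i0).2 (SimpleGraph.Reachable.refl _)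
        have hi : (i : ℤ) + 1 ∉ X := fun h => huw ((rowX i).1 h)
        by_cases h1 : (1 : ℤ) ∈ Y
        · refine ⟨((i : ℤ) + 1, 1), ⟨by omega, by omega, le_refl _, by omega⟩, ?_⟩
          rintro ⟨_, (⟨ha, _⟩ | ⟨_, hb⟩)⟩
          · exact hi ha
          · exact hb h1
        · refine ⟨((i0 : ℤ) + 1, 1), ⟨by omega, by omega, le_refl _, by omega⟩, ?_⟩
          rintro ⟨_, (⟨_, hb⟩ | ⟨ha, _⟩)⟩
          · exact h1 hb
          · exact ha h0
      | Sum.inl i0, Sum.inr j =>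
        have h0 : (i0 : ℤ) + 1 ∈ X := (rowX i0).2 (SimpleGraph.Reachable.refl _)
        have hj : (j : ℤ) + 1 ∉ Y := fun h => huw ((colY j).1 h)
        refine ⟨((i0 : ℤ) + 1, (j : ℤ) + 1), ⟨by omega, by omega, by omega, by omega⟩, ?_⟩
        rintro ⟨_, (⟨_, hb⟩ | ⟨ha, _⟩)⟩
        · exact hj hb
        · exact ha h0
      | Sum.inr j0, Sum.inl i =>
        have h0 : (j0 : ℤ) + 1 ∈ Y := (colY j0).2 (SimpleGraph.Reachable.refl _)
        have hi : (i : ℤ) + 1 ∉ X := fun h => huw ((rowX i).1 h)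
        refine ⟨((i : ℤ) + 1, (j0 : ℤ) + 1), ⟨by omega, by omega, by omega, by omega⟩, ?_⟩
        rintro ⟨_, (⟨ha, _⟩ | ⟨_, hb⟩)⟩
        · exact hi ha
        · exact hb h0
      | Sum.inr j0, Sum.inr j =>
        have h0 : (j0 : ℤ) + 1 ∈ Y := (colY j0).2 (SimpleGraph.Reachable.refl _)
        have hj : (j : ℤ) + 1 ∉ Y := fun h => huw ((colY j).1 h)
        by_cases h1 : (1 : ℤ) ∈ X
        · refine ⟨(1, (j : ℤ) + 1), ⟨le_refl _, by omega, by omega, by omega⟩, ?_⟩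
          rintro ⟨_, (⟨_, hb⟩ | ⟨ha, _⟩)⟩
          · exact hj hb
          · exact ha h1
        · refine ⟨(1, (j0 : ℤ) + 1), ⟨le_refl _, by omega, by omega, by omega⟩, ?_⟩
          rintro ⟨_, (⟨ha, _⟩ | ⟨_, hb⟩)⟩
          · exact h1 ha
          · exact hb h0
    obtain ⟨v, hvR, hvS⟩ := key
    intro hspan
    exact hvS (hsub (hspan hvR))
end
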